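/- arXiv:1710.09780 — 3 statements merged into one kernel-verified Lean document; each statement's English description precedes it below -/
import Mathlib

section
/- Let N ≥ 2 be an integer and write L = (log₂ N)⁴ (the fourth power of the base-2 logarithm of N, rounded appropriately, e.g. L = ⌈log₂ N⌉⁴). Then N is prime if and only if the following three conditions all hold: (1) N is not a perfect power, i.e. there are no integers a ≥ 2 and b ≥ 2 with N = a^b; (2) N has no prime divisor p with p < N and p ≤ L; (3) for every pair of natural numbers r, a with 1 ≤ r < L and 1 ≤ a < L, the congruence of polynomials (X + a)^N ≡ X^N + a (mod X^r − 1) holds in the polynomial ring (ℤ/Nℤ)[X]. -/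
open Polynomial

private lemma pow4_le_two_pow {k : ℕ} (hk : 16 ≤ k) : k ^ 4 ≤ 2 ^ k := by
  induction k with
  | zero => omega
  | succ n ih =>
    rcases Nat.lt_or_ge n 16 with h | h
    · have hn : n = 15 := by omega
      subst hn; norm_num
    · have h1 : n ^ 4 ≤ 2 ^ n := ih (by omega)
      have e4 : 16 * n ^ 3 ≤ n ^ 4 := by
        calc 16 * n ^ 3 ≤ n * n ^ 3 := Nat.mul_le_mul_right _ h
          _ = n ^ 4 := by ring
      have e1 : n ^ 2 ≤ n ^ 3 := Nat.pow_le_pow_right (by omega) (by omega)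
      have e2 : n ≤ n ^ 3 := Nat.le_self_pow (by omega) n
      have e3 : 1 ≤ n ^ 3 := Nat.one_le_pow _ _ (by omega)
      have h2 : (n + 1) ^ 4 ≤ 2 * n ^ 4 := by nlinarith [e1, e2, e4]
      calc (n + 1) ^ 4 ≤ 2 * n ^ 4 := h2
        _ ≤ 2 * 2 ^ n := by omega
        _ = 2 ^ (n + 1) := by ring

/-- Nair-style lower bound for `lcm(1..n)`. -/
private lemma lcm_lower (n : ℕ) (hn : 2 ≤ n) :
    2 ^ (n - 1) ≤ (n + 1) * (Finset.Icc 1 n).lcm id := by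
  set L := (Finset.Icc 1 n).lcm id with hL
  have hL0 : L ≠ 0 := by
    rw [hL]
    intro h
    rw [Finset.lcm_eq_zero_iff] at h
    obtain ⟨x, hx, hx0⟩ := h
    simp only [Finset.coe_Icc, Set.mem_Icc, Finset.mem_Icc] at hx
    simp only [id_eq] at hx0
    omega
  set m := n / 2 with hm
  have hm1 : 1 ≤ m := by omega
  have h2m : 2 * m ≤ n := by omega
  have hdvd : Nat.centralBinom m ∣ L := by
    have hcb0 : Nat.centralBinom m ≠ 0 := (Nat.centralBinom_pos m).ne'
    rw [← Nat.factorization_le_iff_dvd hcb0 hL0]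
    intro q
    rcases em q.Prime with hq | hq
    · have h1 : (Nat.centralBinom m).factorization q ≤ Nat.log q (2 * m) :=
        Nat.factorization_choose_le_log
      have hmem : q ^ Nat.log q (2 * m) ∈ Finset.Icc 1 n := by
        have hle : q ^ Nat.log q (2 * m) ≤ 2 * m := Nat.pow_log_le_self q (by omega)
        have hpos : 0 < q ^ Nat.log q (2 * m) := Nat.pow_pos hq.pos
        simp only [Finset.mem_Icc]
        omega
      have h2 : q ^ Nat.log q (2 * m) ∣ L := by
        simpa using Finset.dvd_lcm (f := id) hmem
      have h3 : Nat.log q (2 * m) ≤ L.factorization q :=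
        (Nat.Prime.pow_dvd_iff_le_factorization hq hL0).mp h2
      exact le_trans h1 h3
    · simp [Nat.factorization_eq_zero_of_not_prime _ hq]
  have hcbL : Nat.centralBinom m ≤ L := Nat.le_of_dvd (Nat.pos_of_ne_zero hL0) hdvd
  have h4 : 4 ^ m ≤ 2 * m * Nat.centralBinom m :=
    Nat.four_pow_le_two_mul_self_mul_centralBinom m hm1
  calc 2 ^ (n - 1) ≤ 4 ^ m := by
        rw [show (4 : ℕ) = 2 ^ 2 by norm_num, ← pow_mul]
        exact Nat.pow_le_pow_right (by norm_num) (by omega)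
    _ ≤ 2 * m * Nat.centralBinom m := h4
    _ ≤ (n + 1) * L := by
        apply Nat.mul_le_mul (by omega) hcbL

private lemma exists_good_r (M p ℓ : ℕ) (hM : 2 ≤ M) (hp : 2 ≤ p) (hl : 44 ≤ ℓ)
    (hsize : M * p ≤ 2 ^ ℓ)
    (hpow : ∀ x y : ℕ, M ^ x = p ^ y → x = 0 ∧ y = 0)
    (hcop : ∀ r : ℕ, 1 ≤ r → r < ℓ ^ 4 → Nat.Coprime (M * p) r) :
    ∃ r, 1 ≤ r ∧ r < ℓ ^ 4 ∧
      ∀ i1 j1 i2 j2 : ℕ, i1 < ℓ / 2 → j1 < ℓ / 2 → i2 < ℓ / 2 → j2 < ℓ / 2 →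
        M ^ i1 * p ^ j1 ≡ M ^ i2 * p ^ j2 [MOD r] → i1 = i2 ∧ j1 = j2 := by
  by_contra hcon
  push_neg at hcon
  set c := ℓ / 2 with hc
  have hc22 : 22 ≤ c := by omega
  -- the master product
  set B : ℕ := (M * p) ^ (2 * (c - 1)) with hB
  have hB1 : 1 ≤ B := Nat.one_le_pow _ _ (by positivity)
  set F : ℕ → ℕ → ℕ := fun x y =>
    if x = 0 ∧ y = 0 then 1
    else (M ^ x * p ^ y - 1) * ((M : ℤ) ^ x - (p : ℤ) ^ y).natAbs with hF
  set P : ℕ := ∏ x ∈ Finset.range c, ∏ y ∈ Finset.range c, F x y with hP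
  -- positivity of each factor
  have hFpos : ∀ x y, 0 < F x y := by
    intro x y
    rw [hF]
    dsimp only
    split_ifs with h
    · norm_num
    · have h1 : 2 ≤ M ^ x * p ^ y ∨ ¬(x = 0 ∧ y = 0) := by tauto
      have hxy0 : ¬(x = 0 ∧ y = 0) := h
      have hMP2 : 2 ≤ M ^ x * p ^ y := by
        rcases Nat.eq_zero_or_pos x with hx | hx
        · subst hx
          have hy : y ≠ 0 := by tauto
          have : 2 ≤ p ^ y := by
            calc 2 = 2 ^ 1 := by norm_num
            _ ≤ p ^ y := Nat.pow_le_pow_left hp 1 |>.trans (Nat.pow_le_pow_right (by omega) (by omega))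
          simpa using this
        · have : 2 ≤ M ^ x := by
            calc 2 = 2 ^ 1 := by norm_num
            _ ≤ M ^ x := Nat.pow_le_pow_left hM 1 |>.trans (Nat.pow_le_pow_right (by omega) (by omega))
          have hpy : 1 ≤ p ^ y := Nat.one_le_pow _ _ (by omega)
          calc 2 ≤ M ^ x := this
            _ = M ^ x * 1 := by ring
            _ ≤ M ^ x * p ^ y := Nat.mul_le_mul_left _ hpy
      have hne : (M : ℤ) ^ x ≠ (p : ℤ) ^ y := by
        intro he
        have : M ^ x = p ^ y := by exact_mod_cast he
        exact hxy0 (hpow _ _ this)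
      have h2 : 0 < ((M : ℤ) ^ x - (p : ℤ) ^ y).natAbs := by
        rw [Int.natAbs_pos]
        exact sub_ne_zero_of_ne hne
      have h3 : 0 < M ^ x * p ^ y - 1 := by omega
      positivity
  -- bound on each factor
  have hFle : ∀ x y, x < c → y < c → F x y ≤ B := by
    intro x y hx hy
    have hMx : M ^ x ≤ (M * p) ^ (c - 1) := by
      calc M ^ x ≤ M ^ (c - 1) := Nat.pow_le_pow_right (by omega) (by omega)
        _ ≤ (M * p) ^ (c - 1) := Nat.pow_le_pow_left (Nat.le_mul_of_pos_right _ (by omega)) _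
    have hpy : p ^ y ≤ (M * p) ^ (c - 1) := by
      calc p ^ y ≤ p ^ (c - 1) := Nat.pow_le_pow_right (by omega) (by omega)
        _ ≤ (M * p) ^ (c - 1) := Nat.pow_le_pow_left (Nat.le_mul_of_pos_left _ (by omega)) _
    have h1 : M ^ x * p ^ y - 1 ≤ (M * p) ^ (c - 1) := by
      have : M ^ x * p ^ y ≤ (M * p) ^ (c - 1) := by
        calc M ^ x * p ^ y ≤ M ^ (c-1) * p ^ (c-1) :=
              Nat.mul_le_mul (Nat.pow_le_pow_right (by omega) (by omega))
                (Nat.pow_le_pow_right (by omega) (by omega))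
          _ = (M * p) ^ (c - 1) := (mul_pow M p (c-1)).symm
      omega
    have h2 : ((M : ℤ) ^ x - (p : ℤ) ^ y).natAbs ≤ (M * p) ^ (c - 1) := by
      have hcast : ((M : ℤ) ^ x - (p : ℤ) ^ y) = ((M ^ x : ℕ) : ℤ) - ((p ^ y : ℕ) : ℤ) := by
        push_cast; ring
      rw [hcast]
      have : (((M ^ x : ℕ) : ℤ) - ((p ^ y : ℕ) : ℤ)).natAbs ≤ max (M ^ x) (p ^ y) := by
        omega
      exact this.trans (max_le hMx hpy)
    rw [hF]
    dsimp only
    split_ifs with h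
    · exact hB1
    · calc (M ^ x * p ^ y - 1) * ((M : ℤ) ^ x - (p : ℤ) ^ y).natAbs
          ≤ (M * p) ^ (c - 1) * (M * p) ^ (c - 1) := Nat.mul_le_mul h1 h2
        _ = B := by rw [hB, two_mul, pow_add]
  -- every r in [1, ℓ^4) divides P
  have hrdvd : ∀ r, 1 ≤ r → r < ℓ ^ 4 → r ∣ P := by
    intro r hr1 hr2
    obtain ⟨i1, j1, i2, j2, hi1, hj1, hi2, hj2, hmod, hne⟩ := hcon r hr1 hr2
    have hcopr := hcop r hr1 hr2
    have hcopM : Nat.Coprime M r := Nat.Coprime.coprime_dvd_left (dvd_mul_right M p) hcopr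
    have hcopp : Nat.Coprime p r := Nat.Coprime.coprime_dvd_left (dvd_mul_left p M) hcopr
    have hFP : ∀ x y, x < c → y < c → F x y ∣ P := by
      intro x y hx hy
      calc F x y ∣ ∏ y' ∈ Finset.range c, F x y' :=
            Finset.dvd_prod_of_mem (F x) (Finset.mem_range.mpr hy)
        _ ∣ P := Finset.dvd_prod_of_mem (fun x' => ∏ y' ∈ Finset.range c, F x' y')
            (Finset.mem_range.mpr hx)
    have key : ∀ a1 b1 a2 b2 : ℕ, a1 < c → b1 < c → a2 < c → b2 < c → a2 ≤ a1 →
        (M ^ a1 * p ^ b1 ≡ M ^ a2 * p ^ b2 [MOD r]) → ¬(a1 = a2 ∧ b1 = b2) → r ∣ P := by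
      intro a1 b1 a2 b2 ha1 hb1 ha2 hb2 hle hm hne2
      set x := a1 - a2 with hxdef
      have hxc : x < c := by omega
      have e1 : M ^ a1 * p ^ b1 = M ^ a2 * (M ^ x * p ^ b1) := by
        rw [show a1 = a2 + x by omega, pow_add]; ring
      rw [e1] at hm
      have hm2 : M ^ x * p ^ b1 ≡ p ^ b2 [MOD r] :=
        Nat.ModEq.cancel_left_of_coprime (hcopM.pow_left a2).symm hm
      rcases le_total b1 b2 with hb | hb
      · -- M^x ≡ p^y [MOD r]
        set y := b2 - b1 with hydef
        have hyc : y < c := by omega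
        have e2 : p ^ b2 = p ^ b1 * p ^ y := by
          rw [← pow_add]; congr 1; omega
        rw [e2, mul_comm (M ^ x) (p ^ b1)] at hm2
        have hm3 : M ^ x ≡ p ^ y [MOD r] :=
          Nat.ModEq.cancel_left_of_coprime (hcopp.pow_left b1).symm hm2
        have hxy0 : ¬(x = 0 ∧ y = 0) := by
          rintro ⟨hx0, hy0⟩
          exact hne2 ⟨by omega, by omega⟩
        have hdZ : (r : ℤ) ∣ (M : ℤ) ^ x - (p : ℤ) ^ y := by
          have h := hm3.dvd
          rw [dvd_sub_comm] at h
          convert h using 1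
          exacts [rfl, by push_cast; ring]
        have hdN : r ∣ ((M : ℤ) ^ x - (p : ℤ) ^ y).natAbs := by
          have := Int.natAbs_dvd_natAbs.mpr hdZ
          simpa using this
        have hrF : r ∣ F x y := by
          rw [hF]; dsimp only
          rw [if_neg hxy0]
          exact Dvd.dvd.mul_left hdN _
        exact hrF.trans (hFP x y hxc hyc)
      · -- M^x * p^y ≡ 1 [MOD r]
        set y := b1 - b2 with hydef
        have hyc : y < c := by omega
        have e2 : p ^ b1 = p ^ b2 * p ^ y := by
          rw [← pow_add]; congr 1; omega
        have e3 : M ^ x * p ^ b1 = p ^ b2 * (M ^ x * p ^ y) := by rw [e2]; ring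
        rw [e3, show p ^ b2 = p ^ b2 * 1 from (mul_one _).symm] at hm2
        rw [show p ^ b2 * 1 * (M ^ x * p ^ y) = p ^ b2 * (M ^ x * p ^ y) by ring] at hm2
        have hm3 : M ^ x * p ^ y ≡ 1 [MOD r] :=
          Nat.ModEq.cancel_left_of_coprime (hcopp.pow_left b2).symm hm2
        have hxy0 : ¬(x = 0 ∧ y = 0) := by
          rintro ⟨hx0, hy0⟩
          have hb12 : b1 = b2 := by omega
          exact hne2 ⟨by omega, hb12⟩
        have h1le : 1 ≤ M ^ x * p ^ y := Nat.one_le_iff_ne_zero.mpr (by positivity)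
        have hdN : r ∣ M ^ x * p ^ y - 1 := (Nat.modEq_iff_dvd' h1le).mp hm3.symm
        have hrF : r ∣ F x y := by
          rw [hF]; dsimp only
          rw [if_neg hxy0]
          exact Dvd.dvd.mul_right hdN _
        exact hrF.trans (hFP x y hxc hyc)
    have hne' : ¬(i1 = i2 ∧ j1 = j2) := by tauto
    rcases le_total i2 i1 with hij | hij
    · exact key i1 j1 i2 j2 hi1 hj1 hi2 hj2 hij hmod hne'
    · exact key i2 j2 i1 j1 hi2 hj2 hi1 hj1 hij hmod.symm (by tauto)
  -- assemble the size contradiction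
  have hlcm : (Finset.Icc 1 (ℓ ^ 4 - 1)).lcm id ∣ P := by
    apply Finset.lcm_dvd
    intro b hb
    simp only [Finset.mem_Icc] at hb
    simpa using hrdvd b hb.1 (by omega)
  have hP0 : 0 < P :=
    Finset.prod_pos fun x _ => Finset.prod_pos fun y _ => hFpos x y
  have hlcmP : (Finset.Icc 1 (ℓ ^ 4 - 1)).lcm id ≤ P := Nat.le_of_dvd hP0 hlcm
  have hl4big : 44 ^ 4 ≤ ℓ ^ 4 := Nat.pow_le_pow_left (by omega) 4
  have hlow := lcm_lower (ℓ ^ 4 - 1) (by omega)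
  set E := 2 * (c - 1) * (c * c) with hE
  have hPle : P ≤ 2 ^ (ℓ * E) := by
    have hinner : ∀ x ∈ Finset.range c, (∏ y ∈ Finset.range c, F x y) ≤ B ^ c := by
      intro x hx
      have := Finset.prod_le_pow_card (Finset.range c) (F x) B
        (fun y hy => hFle x y (Finset.mem_range.mp hx) (Finset.mem_range.mp hy))
      simpa using this
    have h1 : P ≤ (B ^ c) ^ c := by
      have := Finset.prod_le_pow_card (Finset.range c)
        (fun x' => ∏ y' ∈ Finset.range c, F x' y') (B ^ c) hinner
      simpa [hP] using this
    calc P ≤ (B ^ c) ^ c := h1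
      _ = (M * p) ^ E := by rw [hB, ← pow_mul, ← pow_mul, hE]
      _ ≤ (2 ^ ℓ) ^ E := Nat.pow_le_pow_left hsize E
      _ = 2 ^ (ℓ * E) := by rw [← pow_mul]
  have h2l : ℓ ^ 4 ≤ 2 ^ ℓ := pow4_le_two_pow (by omega)
  have hchain : 2 ^ (ℓ ^ 4 - 2) ≤ 2 ^ (ℓ + ℓ * E) := by
    calc 2 ^ (ℓ ^ 4 - 2) = 2 ^ (ℓ ^ 4 - 1 - 1) := by congr 1
      _ ≤ (ℓ ^ 4 - 1 + 1) * (Finset.Icc 1 (ℓ ^ 4 - 1)).lcm id := hlow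
      _ ≤ (ℓ ^ 4) * P := by
          apply Nat.mul_le_mul _ hlcmP
          omega
      _ ≤ 2 ^ ℓ * 2 ^ (ℓ * E) := Nat.mul_le_mul h2l hPle
      _ = 2 ^ (ℓ + ℓ * E) := by rw [← pow_add]
  have hexp : ℓ ^ 4 - 2 ≤ ℓ + ℓ * E := by
    exact (Nat.pow_le_pow_iff_right (by norm_num)).mp hchain
  -- final arithmetic contradiction
  have hc2 : 2 * c ≤ ℓ := by omega
  have m2 : (2 * c) * (2 * c) ≤ ℓ * ℓ := Nat.mul_le_mul hc2 hc2
  have h8E : 8 * E ≤ 2 * ℓ ^ 3 := by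
    calc 8 * E = (2 * (c - 1)) * (8 * (c * c)) := by rw [hE]; ring
      _ ≤ ℓ * (8 * (c * c)) := Nat.mul_le_mul_right _ (by omega)
      _ = 2 * (ℓ * ((2 * c) * (2 * c))) := by ring
      _ ≤ 2 * (ℓ * (ℓ * ℓ)) :=
          Nat.mul_le_mul_left 2 (Nat.mul_le_mul_left ℓ m2)
      _ = 2 * ℓ ^ 3 := by ring
  have hbig : ℓ + ℓ * E + 3 ≤ ℓ ^ 4 := by nlinarith [h8E, hl, hc22]
  omega

private lemma digits_inj : ∀ (D v1 v2 : ℕ), v1 < 32 ^ D → v2 < 32 ^ D →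
    (∀ i < D, v1 / 32 ^ i % 32 = v2 / 32 ^ i % 32) → v1 = v2 := by
  intro D
  induction D with
  | zero =>
    intro v1 v2 h1 h2 _
    simp only [pow_zero, Nat.lt_one_iff] at h1 h2
    omega
  | succ n ih =>
    intro v1 v2 h1 h2 hd
    have h0 := hd 0 (by omega)
    simp only [pow_zero, Nat.div_one] at h0
    have hrec : v1 / 32 = v2 / 32 := by
      apply ih (v1 / 32) (v2 / 32)
      · rw [Nat.div_lt_iff_lt_mul (by norm_num)]
        calc v1 < 32 ^ (n + 1) := h1
          _ = 32 ^ n * 32 := by rw [pow_succ]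
      · rw [Nat.div_lt_iff_lt_mul (by norm_num)]
        calc v2 < 32 ^ (n + 1) := h2
          _ = 32 ^ n * 32 := by rw [pow_succ]
      · intro i hi
        have := hd (i + 1) (by omega)
        rwa [pow_succ, mul_comm (32 ^ i) 32, ← Nat.div_div_eq_div_mul,
          ← Nat.div_div_eq_div_mul] at this
    omega

set_option maxHeartbeats 1000000 in
private theorem aks_backward (N : ℕ) (hN : 2 ≤ N)
    (h1 : ¬∃ a b : ℕ, 2 ≤ a ∧ 2 ≤ b ∧ N = a ^ b)
    (h2 : ¬∃ p : ℕ, p.Prime ∧ p ∣ N ∧ p < N ∧ p ≤ Nat.clog 2 N ^ 4)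
    (h3 : ∀ r a : ℕ, 1 ≤ r → r < Nat.clog 2 N ^ 4 → 1 ≤ a → a < Nat.clog 2 N ^ 4 →
      (X ^ r - 1 : (ZMod N)[X]) ∣ ((X + C (a : ZMod N)) ^ N - (X ^ N + C (a : ZMod N)))) :
    N.Prime := by
  by_contra hNP
  set ℓ := Nat.clog 2 N with hldef
  set L := ℓ ^ 4 with hLdef
  set p := N.minFac with hpdef
  have hp : p.Prime := Nat.minFac_prime (by omega)
  have hpdvd : p ∣ N := Nat.minFac_dvd N
  have hpltN : p < N := by
    rcases lt_or_eq_of_le (Nat.le_of_dvd (by omega) hpdvd) with h | h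
    · exact h
    · exact absurd (h ▸ hp) hNP
  have hpL : L < p := by
    by_contra hle
    exact h2 ⟨p, hp, hpdvd, hpltN, by omega⟩
  set M := N / p with hMdef
  have hNM : M * p = N := Nat.div_mul_cancel hpdvd
  have hM1 : 1 ≤ M := Nat.one_le_div_iff hp.pos |>.mpr (Nat.le_of_dvd (by omega) hpdvd)
  have hM2 : 2 ≤ M := by
    rcases Nat.lt_or_ge M 2 with h | h
    · have hM1' : M = 1 := by omega
      rw [hM1', one_mul] at hNM
      omega
    · exact h
  have hL2 : 2 ≤ L := by
    have : 1 ≤ ℓ := Nat.clog_pos (by norm_num) hN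
    calc 2 = 2 ^ 1 := by norm_num
      _ ≤ ℓ ^ 4 := by
        rcases Nat.lt_or_ge ℓ 2 with h | h
        · have : p ≤ N := le_of_lt hpltN
          -- ℓ = 1 means N ≤ 2, so N = 2 prime, contradiction
          have hN2 : N ≤ 2 ^ ℓ := Nat.le_pow_clog (by norm_num) N
          have hℓ1 : ℓ = 1 := by omega
          rw [hℓ1] at hN2
          interval_cases N
          · exact absurd Nat.prime_two hNP
        · calc (2:ℕ) ^ 1 ≤ 2 ^ 4 := by norm_num
            _ ≤ ℓ ^ 4 := Nat.pow_le_pow_left h 4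
  -- sizes
  have hN2l : N ≤ 2 ^ ℓ := Nat.le_pow_clog (by norm_num) N
  have hp2N : p ^ 2 ≤ N := Nat.minFac_sq_le_self (by omega) hNP
  have hNL : (L + 1) * (L + 1) ≤ N := by
    calc (L + 1) * (L + 1) ≤ p * p := Nat.mul_le_mul (by omega) (by omega)
      _ = p ^ 2 := (sq p).symm
      _ ≤ N := hp2N
  have hl1 : 1 ≤ ℓ := Nat.clog_pos (by norm_num) hN
  have hl44 : 44 ≤ ℓ := by
    by_contra hcon
    have hbound : (ℓ ^ 4 + 1) * (ℓ ^ 4 + 1) ≤ 2 ^ ℓ := le_trans (by rw [hLdef] at hNL; exact hNL) hN2l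
    interval_cases ℓ <;> norm_num at hbound
  have hNlt : N < 2 ^ ℓ := by
    rcases lt_or_eq_of_le hN2l with h | h
    · exact h
    · exfalso
      have h2dvd : 2 ∣ N := by
        rw [h]
        exact dvd_pow_self 2 (by omega)
      have : p ≤ 2 := Nat.minFac_le_of_dvd (by norm_num) h2dvd
      have : 44 ^ 4 ≤ L := by
        rw [hLdef]; exact Nat.pow_le_pow_left hl44 4
      omega
  -- power lemma
  have hppow : ∀ x y : ℕ, M ^ x = p ^ y → x = 0 ∧ y = 0 := by
    intro x y hxy
    rcases Nat.eq_zero_or_pos x with hx | hx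
    · subst hx
      simp only [pow_zero] at hxy
      refine ⟨rfl, ?_⟩
      by_contra hy
      have : p ^ 1 ≤ p ^ y := Nat.pow_le_pow_right hp.pos (by omega)
      simp only [pow_one] at this
      have h2p : 2 ≤ p := hp.two_le
      omega
    · exfalso
      have hMdvdpy : M ∣ p ^ y := hxy ▸ dvd_pow_self M (by omega)
      obtain ⟨k, hky, hMk⟩ := (Nat.dvd_prime_pow hp).mp hMdvdpy
      have hk1 : 1 ≤ k := by
        rcases Nat.eq_zero_or_pos k with h | h
        · rw [h, pow_zero] at hMk; omega
        · exact h
      refine h1 ⟨p, k + 1, hp.two_le, by omega, ?_⟩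
      rw [← hNM, hMk, pow_succ, mul_comm]
  -- coprimality
  have hcop : ∀ r : ℕ, 1 ≤ r → r < L → Nat.Coprime N r := by
    intro r hr1 hr2
    by_contra hc
    have hgpos : 0 < Nat.gcd N r := Nat.gcd_pos_of_pos_right N (by omega)
    have hg2 : 2 ≤ Nat.gcd N r := by
      rcases Nat.lt_or_ge (Nat.gcd N r) 2 with h | h
      · exact absurd (by omega : Nat.gcd N r = 1) hc
      · exact h
    have hq : (Nat.gcd N r).minFac.Prime := Nat.minFac_prime (by omega)
    have hqN : (Nat.gcd N r).minFac ∣ N := (Nat.minFac_dvd _).trans (Nat.gcd_dvd_left _ _)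
    have hqr : (Nat.gcd N r).minFac ∣ r := (Nat.minFac_dvd _).trans (Nat.gcd_dvd_right _ _)
    have hpq : p ≤ (Nat.gcd N r).minFac := Nat.minFac_le_of_dvd hq.two_le hqN
    have hqler : (Nat.gcd N r).minFac ≤ r := Nat.le_of_dvd (by omega) hqr
    omega
  have hcopMp : ∀ r : ℕ, 1 ≤ r → r < L → Nat.Coprime (M * p) r := by
    intro r hr1 hr2
    have := hcop r hr1 hr2
    rwa [← hNM] at this
  obtain ⟨r, hr1, hrL, hrinj⟩ := exists_good_r M p ℓ hM2 hp.two_le hl44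
    (by rw [hNM]; exact hN2l) hppow (by rw [← hLdef]; exact hcopMp)
  set c := ℓ / 2 with hcdef
  have hc22 : 22 ≤ c := by omega
  haveI : NeZero r := ⟨by omega⟩
  have hcopM : Nat.Coprime M r :=
    Nat.Coprime.coprime_dvd_left (dvd_mul_right M p) (hcopMp r hr1 hrL)
  have hcopp : Nat.Coprime p r :=
    Nat.Coprime.coprime_dvd_left (dvd_mul_left p M) (hcopMp r hr1 hrL)
  set Mu := ZMod.unitOfCoprime M hcopM with hMu
  set pu := ZMod.unitOfCoprime p hcopp with hpu
  set G := Subgroup.closure ({Mu, pu} : Set (ZMod r)ˣ) with hG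
  have hMuG : Mu ∈ G := Subgroup.subset_closure (by simp)
  have hpuG : pu ∈ G := Subgroup.subset_closure (by simp)
  set t := Nat.card G with ht
  have hcoe : ∀ i j : ℕ, ((Mu ^ i * pu ^ j : (ZMod r)ˣ) : ZMod r) = ((M ^ i * p ^ j : ℕ) : ZMod r) := by
    intro i j
    push_cast [hMu, hpu, ZMod.coe_unitOfCoprime]
    ring
  -- lower bound on t
  have htlb : c * c ≤ t := by
    have hinj2 : Function.Injective
        (fun ij : Fin c × Fin c =>
          (⟨Mu ^ (ij.1 : ℕ) * pu ^ (ij.2 : ℕ),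
            mul_mem (G.pow_mem hMuG _) (G.pow_mem hpuG _)⟩ : G)) := by
      intro a b hab
      simp only [Subtype.mk.injEq] at hab
      have hcast : ((M ^ (a.1 : ℕ) * p ^ (a.2 : ℕ) : ℕ) : ZMod r)
          = ((M ^ (b.1 : ℕ) * p ^ (b.2 : ℕ) : ℕ) : ZMod r) := by
        rw [← hcoe, ← hcoe, hab]
      have hmod := (ZMod.natCast_eq_natCast_iff _ _ _).mp hcast
      have hres := hrinj _ _ _ _ a.1.isLt a.2.isLt b.1.isLt b.2.isLt hmod
      exact Prod.ext (Fin.ext hres.1) (Fin.ext hres.2)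
    have hle := Nat.card_le_card_of_injective _ hinj2
    simpa [Nat.card_eq_fintype_card] using hle
  have ht484 : 484 ≤ t := le_trans (by exact Nat.mul_le_mul hc22 hc22) htlb
  -- upper bound on t
  have httot : t ≤ Nat.totient r := by
    have hle := Nat.card_le_card_of_injective ((↑·) : G → (ZMod r)ˣ) Subtype.coe_injective
    rwa [Nat.card_eq_fintype_card (α := (ZMod r)ˣ), ZMod.card_units_eq_totient r] at hle
  have htr : t ≤ r := le_trans httot (Nat.totient_le r)
  have htL : t < L := by omega
  -- sqrt facts
  set u := Nat.sqrt t with hu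
  have huc : c ≤ u := by
    calc c = Nat.sqrt (c * c) := (Nat.sqrt_eq c).symm
      _ ≤ Nat.sqrt t := Nat.sqrt_le_sqrt htlb
  have hu22 : 22 ≤ u := by omega
  have hul : u ≤ ℓ ^ 2 := by
    have h1 : t ≤ ℓ ^ 2 * (ℓ ^ 2) := by
      have : L = ℓ ^ 2 * ℓ ^ 2 := by rw [hLdef]; ring
      omega
    calc u ≤ Nat.sqrt (ℓ ^ 2 * ℓ ^ 2) := Nat.sqrt_le_sqrt h1
      _ = ℓ ^ 2 := Nat.sqrt_eq (ℓ ^ 2)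
  have htu : t < (u + 1) * (u + 1) := by
    have := Nat.lt_succ_sqrt' t
    calc t < (Nat.sqrt t + 1) ^ 2 := by
          simpa [Nat.succ_eq_add_one] using this
      _ = (u + 1) * (u + 1) := by rw [← hu]; ring
  -- pigeonhole collision in G
  haveI : Fintype G := Fintype.ofFinite _
  obtain ⟨xx, yy, hne, heq⟩ : ∃ x y : Fin (u + 1) × Fin (u + 1), x ≠ y ∧
      (Mu ^ (x.1 : ℕ) * pu ^ (x.2 : ℕ)) = (Mu ^ (y.1 : ℕ) * pu ^ (y.2 : ℕ)) := by
    have hcard : Fintype.card G < Fintype.card (Fin (u + 1) × Fin (u + 1)) := by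
      have h1 : Fintype.card G = t := (Nat.card_eq_fintype_card (α := G)).symm
      simp only [Fintype.card_prod, Fintype.card_fin]
      omega
    obtain ⟨x, y, hxy, hf⟩ := Fintype.exists_ne_map_eq_of_card_lt
      (fun ij : Fin (u + 1) × Fin (u + 1) =>
        (⟨Mu ^ (ij.1 : ℕ) * pu ^ (ij.2 : ℕ),
          mul_mem (G.pow_mem hMuG _) (G.pow_mem hpuG _)⟩ : G)) hcard
    exact ⟨x, y, hxy, by simpa [Subtype.ext_iff] using hf⟩
  -- names for the collision exponents
  -- uniqueness of representation in ℕ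
  have hkey : ∀ a1 b1 a2 b2 : ℕ, a2 ≤ a1 → M ^ a1 * p ^ b1 = M ^ a2 * p ^ b2 →
      a1 = a2 ∧ b1 = b2 := by
    intro a1 b1 a2 b2 hle he
    have e1 : M ^ a2 * (M ^ (a1 - a2) * p ^ b1) = M ^ a2 * p ^ b2 := by
      rw [show a1 = a2 + (a1 - a2) by omega, pow_add] at he
      rw [← he]; ring
    have e2 : M ^ (a1 - a2) * p ^ b1 = p ^ b2 :=
      Nat.eq_of_mul_eq_mul_left (Nat.pow_pos (by omega)) e1
    rcases le_total b1 b2 with hb | hb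
    · have e3 : p ^ b1 * M ^ (a1 - a2) = p ^ b1 * p ^ (b2 - b1) := by
        rw [show b2 = b1 + (b2 - b1) by omega, pow_add] at e2
        rw [← e2]; ring
      have e4 : M ^ (a1 - a2) = p ^ (b2 - b1) :=
        Nat.eq_of_mul_eq_mul_left (Nat.pow_pos (by omega)) e3
      have := hppow _ _ e4
      omega
    · have hplb : p ^ b1 ≤ p ^ b2 := by
        calc p ^ b1 = 1 * p ^ b1 := (one_mul _).symm
          _ ≤ M ^ (a1 - a2) * p ^ b1 :=
              Nat.mul_le_mul_right _ (Nat.one_le_pow _ _ (by omega))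
          _ = p ^ b2 := e2
      have hb2b1 : b1 ≤ b2 := by
        by_contra hcon2
        have : p ^ b2 < p ^ b1 := Nat.pow_lt_pow_right hp.one_lt (by omega)
        omega
      have hb12 : b1 = b2 := by omega
      rw [hb12] at e2
      have e5 : M ^ (a1 - a2) = 1 := by
        have hpp : 0 < p ^ b2 := Nat.pow_pos (by omega)
        have h' : M ^ (a1 - a2) * p ^ b2 = 1 * p ^ b2 := by rw [one_mul]; exact e2
        exact Nat.eq_of_mul_eq_mul_right hpp h'
      have h6 : a1 - a2 = 0 ∧ (0 : ℕ) = 0 := hppow _ 0 (by simpa using e5)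
      exact ⟨by omega, hb12⟩
  -- collision integers, ordered
  have hm12mod : (M ^ ((xx.1 : ℕ)) * p ^ ((xx.2 : ℕ))) ≡ (M ^ ((yy.1 : ℕ)) * p ^ ((yy.2 : ℕ))) [MOD r] := by
    apply (ZMod.natCast_eq_natCast_iff _ _ _).mp
    rw [← hcoe, ← hcoe, heq]
  have hm12ne : (M ^ ((xx.1 : ℕ)) * p ^ ((xx.2 : ℕ))) ≠ (M ^ ((yy.1 : ℕ)) * p ^ ((yy.2 : ℕ))) := by
    intro he
    apply hne
    rcases le_total ((yy.1 : ℕ)) ((xx.1 : ℕ)) with h | h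
    · obtain ⟨e1, e2⟩ := hkey _ _ _ _ h he
      exact Prod.ext (Fin.ext e1) (Fin.ext e2)
    · obtain ⟨e1, e2⟩ := hkey _ _ _ _ h he.symm
      exact Prod.ext (Fin.ext e1.symm) (Fin.ext e2.symm)
  obtain ⟨a1, b1, a2, b2, ha1u, hb1u, ha2u, hb2u, hmod, hltm⟩ :
      ∃ a1 b1 a2 b2 : ℕ, a1 ≤ u ∧ b1 ≤ u ∧ a2 ≤ u ∧ b2 ≤ u ∧
        (M ^ a1 * p ^ b1) ≡ (M ^ a2 * p ^ b2) [MOD r] ∧ M ^ a2 * p ^ b2 < M ^ a1 * p ^ b1 := by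
    rcases lt_or_gt_of_ne hm12ne with h | h
    · exact ⟨yy.1, yy.2, xx.1, xx.2, Nat.lt_succ_iff.mp yy.1.isLt, Nat.lt_succ_iff.mp yy.2.isLt,
        Nat.lt_succ_iff.mp xx.1.isLt, Nat.lt_succ_iff.mp xx.2.isLt, hm12mod.symm, h⟩
    · exact ⟨xx.1, xx.2, yy.1, yy.2, Nat.lt_succ_iff.mp xx.1.isLt, Nat.lt_succ_iff.mp xx.2.isLt,
        Nat.lt_succ_iff.mp yy.1.isLt, Nat.lt_succ_iff.mp yy.2.isLt, hm12mod, h⟩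
  set m1 := M ^ a1 * p ^ b1 with hm1def
  set m2 := M ^ a2 * p ^ b2 with hm2def
  have hm1le : m1 ≤ N ^ u := by
    calc m1 ≤ M ^ u * p ^ u :=
          Nat.mul_le_mul (Nat.pow_le_pow_right (by omega) ha1u) (Nat.pow_le_pow_right (by omega) hb1u)
      _ = (M * p) ^ u := (mul_pow M p u).symm
      _ = N ^ u := by rw [hNM]
  have hm21 : 1 ≤ m2 := Nat.one_le_iff_ne_zero.mpr (Nat.mul_ne_zero (pow_ne_zero _ (by omega)) (pow_ne_zero _ (by omega)))
  -- ===================== field part =====================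
  haveI hfact : Fact p.Prime := ⟨hp⟩
  have hcyc0 : (cyclotomic r (ZMod p)) ≠ 0 := cyclotomic_ne_zero r _
  have hcycu : ¬ IsUnit (cyclotomic r (ZMod p)) := by
    intro hu
    have hdeg := natDegree_cyclotomic r (ZMod p)
    have htot : 0 < Nat.totient r := Nat.totient_pos.mpr (by omega)
    have := Polynomial.natDegree_eq_zero_of_isUnit hu
    omega
  obtain ⟨hh, hirr, hhdvd⟩ := WfDvdMonoid.exists_irreducible_factor hcycu hcyc0
  haveI : Fact (Irreducible hh) := ⟨hirr⟩
  set F := AdjoinRoot hh with hFdef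
  set θ : F := AdjoinRoot.root hh with hθdef
  haveI : CharP F p := charP_of_injective_algebraMap (algebraMap (ZMod p) F).injective p
  have hrp : ((r : ℕ) : ZMod p) ≠ 0 := by
    rw [Ne, ZMod.natCast_eq_zero_iff]
    intro hdvd2
    have := Nat.le_of_dvd (by omega) hdvd2
    omega
  haveI : NeZero ((r : ℕ) : F) := by
    constructor
    have hcast : ((r : ℕ) : F) = algebraMap (ZMod p) F ((r : ℕ) : ZMod p) := by
      rw [map_natCast]
    rw [hcast]
    intro hzero
    exact hrp ((map_eq_zero_iff _ (algebraMap (ZMod p) F).injective).mp hzero)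
  have hθcyc : (cyclotomic r F).IsRoot θ := by
    have h1 : aeval θ hh = 0 := by
      rw [hθdef, AdjoinRoot.aeval_eq, AdjoinRoot.mk_self]
    obtain ⟨g, hg⟩ := hhdvd
    have h2 : aeval θ (cyclotomic r (ZMod p)) = 0 := by
      rw [hg, map_mul, h1, zero_mul]
    rw [IsRoot, ← map_cyclotomic r (algebraMap (ZMod p) F), eval_map, ← aeval_def]
    exact h2
  have hprim : IsPrimitiveRoot θ r := isRoot_cyclotomic_iff.mp hθcyc
  have hθr : θ ^ r = 1 := hprim.pow_eq_one
  -- introspective exponents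
  set IntroP : ℕ → Prop := fun m => ∀ a : ℕ, 1 ≤ a → a < L →
    (X ^ r - 1 : (ZMod p)[X]) ∣ ((X + C (a : ZMod p)) ^ m - (X ^ m + C (a : ZMod p))) with hIntroP
  have hIp : IntroP p := by
    intro a _ _
    have hfrob : (X + C (a : ZMod p)) ^ p = X ^ p + C (a : ZMod p) := by
      rw [add_pow_char]
      congr 1
      rw [← Polynomial.C_pow, ZMod.pow_card]
    rw [hfrob]
    simp
  have hIN : IntroP N := by
    intro a ha1 ha2
    have hd := h3 r a hr1 hrL ha1 ha2
    have hmap := Polynomial.map_dvd (ZMod.castHom hpdvd (ZMod p)) hd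
    have e1 : Polynomial.map (ZMod.castHom hpdvd (ZMod p)) (X ^ r - 1 : (ZMod N)[X])
        = (X ^ r - 1 : (ZMod p)[X]) := by
      simp
    have e2 : Polynomial.map (ZMod.castHom hpdvd (ZMod p))
          ((X + C ((a : ℕ) : ZMod N)) ^ N - (X ^ N + C ((a : ℕ) : ZMod N)))
        = ((X + C ((a : ℕ) : ZMod p)) ^ N - (X ^ N + C ((a : ℕ) : ZMod p))) := by
      simp [Polynomial.map_sub, Polynomial.map_add, Polynomial.map_pow, map_C]
    rwa [e1, e2] at hmap
  have hImul : ∀ m n : ℕ, 1 ≤ m → IntroP m → IntroP n → IntroP (m * n) := by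
    intro m n hm1 hm hn a ha1 ha2
    have hA := hm a ha1 ha2
    have hB := hn a ha1 ha2
    have s1 : (X ^ r - 1 : (ZMod p)[X]) ∣
        ((X + C (a : ZMod p)) ^ m) ^ n - (X ^ m + C (a : ZMod p)) ^ n := by
      apply Dvd.dvd.trans hA
      exact Dvd.intro_left _ (geom_sum₂_mul ((X + C (a : ZMod p)) ^ m) (X ^ m + C (a : ZMod p)) n)
    have s2 : (X ^ r - 1 : (ZMod p)[X]) ∣ (X ^ m + C (a : ZMod p)) ^ n - (X ^ (m * n) + C (a : ZMod p)) := by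
      have hexp := map_dvd (Polynomial.expand (ZMod p) m) hB
      have e1 : (Polynomial.expand (ZMod p) m) (X ^ r - 1 : (ZMod p)[X]) = (X ^ r) ^ m - 1 := by
        rw [map_sub, map_one, map_pow, Polynomial.expand_X, ← pow_mul, ← pow_mul, mul_comm r m]
      have e2 : (Polynomial.expand (ZMod p) m)
            ((X + C (a : ZMod p)) ^ n - (X ^ n + C (a : ZMod p)))
          = (X ^ m + C (a : ZMod p)) ^ n - (X ^ (m * n) + C (a : ZMod p)) := by
        rw [map_sub, map_pow, map_add, map_add, map_pow, Polynomial.expand_X, Polynomial.expand_C,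
          ← pow_mul]
      have hdvd1 : (X ^ r - 1 : (ZMod p)[X]) ∣ (X ^ r) ^ m - 1 := by
        have := geom_sum₂_mul ((X : (ZMod p)[X]) ^ r) 1 m
        rw [one_pow] at this
        exact Dvd.intro_left _ this
      rw [e1, e2] at hexp
      exact hdvd1.trans hexp
    have hsplit : (X + C (a : ZMod p)) ^ (m * n) - (X ^ (m * n) + C (a : ZMod p))
        = (((X + C (a : ZMod p)) ^ m) ^ n - (X ^ m + C (a : ZMod p)) ^ n)
          + ((X ^ m + C (a : ZMod p)) ^ n - (X ^ (m * n) + C (a : ZMod p))) := by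
      rw [pow_mul]
      ring
    rw [hsplit]
    exact dvd_add s1 s2
  have hIM : IntroP M := by
    intro a ha1 ha2
    have hN' := hIN a ha1 ha2
    have hΔp : ((X + C (a : ZMod p)) ^ M - (X ^ M + C (a : ZMod p))) ^ p
        = (X + C (a : ZMod p)) ^ N - (X ^ N + C (a : ZMod p)) := by
      rw [sub_pow_char]
      congr 1
      · rw [← pow_mul, hNM]
      · rw [add_pow_char, ← pow_mul, hNM]
        congr 1
        rw [← Polynomial.C_pow, ZMod.pow_card]
    have hsq : Squarefree (X ^ r - 1 : (ZMod p)[X]) := by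
      have hsep : (X ^ r - C (1 : ZMod p)).Separable :=
        Polynomial.separable_X_pow_sub_C 1 hrp one_ne_zero
      rw [map_one] at hsep
      exact hsep.squarefree
    have hdvdp : (X ^ r - 1 : (ZMod p)[X]) ∣
        ((X + C (a : ZMod p)) ^ M - (X ^ M + C (a : ZMod p))) ^ p := by
      rw [hΔp]; exact hN'
    exact (hsq.dvd_pow_iff_dvd hp.ne_zero).mp hdvdp
  have hIone : IntroP 1 := by
    intro a _ _
    simp
  have hIall : ∀ i j : ℕ, IntroP (M ^ i * p ^ j) := by
    have hpowM : ∀ i, IntroP (M ^ i) := by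
      intro i
      induction i with
      | zero => simpa using hIone
      | succ n ihn =>
        have := hImul (M ^ n) M (Nat.one_le_pow _ _ (by omega)) ihn hIM
        rwa [← pow_succ] at this
    intro i j
    induction j with
    | zero => simpa using hpowM i
    | succ n ihn =>
      have := hImul (M ^ i * p ^ n) p
        (Nat.one_le_iff_ne_zero.mpr (Nat.mul_ne_zero (pow_ne_zero _ (by omega)) (pow_ne_zero _ (by omega))))
        ihn hIp
      rwa [mul_assoc, ← pow_succ] at this
  have hIeval : ∀ m : ℕ, IntroP m → ∀ z : F, z ^ r = 1 → ∀ a : ℕ, 1 ≤ a → a < L →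
      (z + (a : F)) ^ m = z ^ m + (a : F) := by
    intro m hm z hz a ha1 ha2
    obtain ⟨q, hq⟩ := hm a ha1 ha2
    have hev := congrArg (aeval z) hq
    simp only [map_sub, map_add, map_pow, map_mul, map_one, aeval_X, aeval_C, map_natCast] at hev
    rw [hz, sub_self, zero_mul, sub_eq_zero] at hev
    exact hev
  -- ===================== counting =====================
  set D := (ℓ * u + 4) / 5 with hDdef
  have hlu968 : 968 ≤ ℓ * u := Nat.mul_le_mul hl44 hu22
  have hD5 : ℓ * u ≤ 5 * D := by omega
  have hD1 : 1 ≤ D := by omega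
  have hDt : D < t := by
    have h1 : ℓ ≤ 2 * u + 1 := by omega
    have h2 : u * u ≤ t := by
      have := Nat.sqrt_le' t
      calc u * u = u ^ 2 := (sq u).symm
        _ ≤ t := by rw [hu]; exact Nat.sqrt_le' t
    have h3 : 21 * u ≤ t := by
      calc 21 * u ≤ u * u := Nat.mul_le_mul_right u (by omega)
        _ ≤ t := h2
    have h4 : ℓ * u ≤ 2 * t + u := by
      calc ℓ * u ≤ (2 * u + 1) * u := Nat.mul_le_mul_right u h1
        _ = 2 * (u * u) + u := by ring
        _ ≤ 2 * t + u := by omega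
    omega
  have h32D : 32 * D ≤ L - 1 := by
    have h1 : ℓ * u ≤ ℓ * ℓ ^ 2 := Nat.mul_le_mul_left ℓ hul
    have h3 : ℓ * ℓ ^ 2 = ℓ ^ 3 := by ring
    have h4 : 44 * ℓ ^ 3 ≤ ℓ * ℓ ^ 3 := Nat.mul_le_mul_right _ hl44
    have h5 : ℓ * ℓ ^ 3 = ℓ ^ 4 := by ring
    have h6 : 1 ≤ ℓ ^ 3 := Nat.one_le_pow _ _ (by omega)
    rw [hLdef]
    omega
  set letter : ℕ → ℕ → ℕ := fun i d => 1 + 32 * i + d with hletter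
  set dig : ℕ → ℕ → ℕ := fun v i => v / 32 ^ i % 32 with hdig
  have hdig32 : ∀ v i, dig v i < 32 := fun v i => Nat.mod_lt _ (by norm_num)
  have hletter_lb : ∀ i d, 1 ≤ letter i d := by intro i d; rw [hletter]; dsimp only; omega
  have hletter_ub : ∀ i d, i < D → d < 32 → letter i d < L := by
    intro i d hi hd
    have h7 : letter i d ≤ 32 * D := by rw [hletter]; dsimp only; omega
    have h8 : 32 * D < L := by omega
    exact lt_of_le_of_lt h7 h8
  set Φz : F → ℕ → F := fun z v => ∏ i ∈ Finset.range D, (z + ((letter i (dig v i) : ℕ) : F))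
    with hΦz
  set Pv : ℕ → (ZMod p)[X] :=
    fun v => ∏ i ∈ Finset.range D, (X + C ((letter i (dig v i) : ℕ) : ZMod p)) with hPvdef
  have hPveval : ∀ (z : F) v, aeval z (Pv v) = Φz z v := by
    intro z v
    rw [hPvdef, hΦz]
    dsimp only
    rw [map_prod]
    apply Finset.prod_congr rfl
    intro i _
    rw [map_add, aeval_X, aeval_C, map_natCast]
  have hΦpow : ∀ m : ℕ, IntroP m → ∀ v, (Φz θ v) ^ m = Φz (θ ^ m) v := by
    intro m hm v
    rw [hΦz]
    dsimp only
    rw [← Finset.prod_pow]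
    apply Finset.prod_congr rfl
    intro i hi
    exact hIeval m hm θ hθr _ (hletter_lb _ _)
      (hletter_ub _ _ (Finset.mem_range.mp hi) (hdig32 v i))
  -- every element of G is represented by a ℕ-power product
  have hGrep : ∀ g : (ZMod r)ˣ, g ∈ G → ∃ i j : ℕ, Mu ^ i * pu ^ j = g := by
    intro g hg
    rw [hG, Subgroup.mem_closure_pair] at hg
    obtain ⟨m, n, hmn⟩ := hg
    have hoM : 0 < orderOf Mu := orderOf_pos Mu
    have hop : 0 < orderOf pu := orderOf_pos pu
    refine ⟨(m % (orderOf Mu : ℤ)).toNat, (n % (orderOf pu : ℤ)).toNat, ?_⟩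
    have e1 : Mu ^ ((m % (orderOf Mu : ℤ)).toNat) = Mu ^ m := by
      rw [← zpow_natCast, Int.toNat_of_nonneg (Int.emod_nonneg m (by exact_mod_cast hoM.ne'))]
      exact zpow_mod_orderOf Mu m
    have e2 : pu ^ ((n % (orderOf pu : ℤ)).toNat) = pu ^ n := by
      rw [← zpow_natCast, Int.toNat_of_nonneg (Int.emod_nonneg n (by exact_mod_cast hop.ne'))]
      exact zpow_mod_orderOf pu n
    rw [e1, e2, hmn]
  set ρ : G → F := fun g => θ ^ (((g : (ZMod r)ˣ) : ZMod r)).val with hρ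
  have hρinj : Function.Injective ρ := by
    intro g1 g2 hg
    have hval := hprim.pow_inj (ZMod.val_lt _) (ZMod.val_lt _) hg
    exact Subtype.ext (Units.ext (ZMod.val_injective r hval))
  have hθordr : orderOf θ = r := hprim.eq_orderOf.symm
  have hρpow : ∀ g : G, ∃ i j : ℕ, ρ g = θ ^ (M ^ i * p ^ j) := by
    intro g
    obtain ⟨i, j, hij⟩ := hGrep g g.2
    refine ⟨i, j, ?_⟩
    have hmg : ((M ^ i * p ^ j : ℕ) : ZMod r) = ((g : (ZMod r)ˣ) : ZMod r) := by
      rw [← hij, ← hcoe]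
    rw [hρ]
    dsimp only
    rw [← hmg, ZMod.val_natCast, ← hθordr, pow_mod_orderOf]
  -- distinct products evaluate injectively at θ
  have hQzero : ∀ v1 v2 : ℕ, Φz θ v1 = Φz θ v2 → Pv v1 = Pv v2 := by
    intro v1 v2 hΦeq
    by_contra hQne
    have hQ0 : Pv v1 - Pv v2 ≠ 0 := sub_ne_zero.mpr hQne
    set QF := (Pv v1 - Pv v2).map (algebraMap (ZMod p) F) with hQFdef
    have hQF0 : QF ≠ 0 := Polynomial.map_ne_zero hQ0
    have hroot : ∀ g : G, QF.IsRoot (ρ g) := by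
      intro g
      obtain ⟨i, j, hij⟩ := hρpow g
      have hIm := hIall i j
      have heval : aeval (θ ^ (M ^ i * p ^ j)) (Pv v1 - Pv v2) = 0 := by
        rw [map_sub, hPveval, hPveval, ← hΦpow _ hIm v1, ← hΦpow _ hIm v2, hΦeq, sub_self]
      rw [IsRoot, hQFdef, eval_map, ← aeval_def, hij]
      exact heval
    have hdegPv : ∀ v, (Pv v).natDegree ≤ D := by
      intro v
      calc (Pv v).natDegree
          ≤ ∑ i ∈ Finset.range D, (X + C ((letter i (dig v i) : ℕ) : ZMod p)).natDegree :=
            Polynomial.natDegree_prod_le _ _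
        _ ≤ ∑ _i ∈ Finset.range D, 1 := by
            apply Finset.sum_le_sum
            intro i _
            rw [Polynomial.natDegree_X_add_C]
        _ = D := by simp
    have hdegQ : QF.natDegree ≤ D := by
      calc QF.natDegree ≤ (Pv v1 - Pv v2).natDegree := Polynomial.natDegree_map_le
        _ ≤ max (Pv v1).natDegree (Pv v2).natDegree := Polynomial.natDegree_sub_le _ _
        _ ≤ D := max_le (hdegPv v1) (hdegPv v2)
    have himg : (Finset.univ.image ρ) ⊆ QF.roots.toFinset := by
      intro x hx
      simp only [Finset.mem_image] at hx
      obtain ⟨g, _, rfl⟩ := hx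
      rw [Multiset.mem_toFinset, mem_roots hQF0]
      exact hroot g
    have hcard1 : t ≤ (Finset.univ.image ρ).card := by
      rw [Finset.card_image_of_injective _ hρinj, ht, Nat.card_eq_fintype_card]
      simp
    have hcard2 : (QF.roots.toFinset).card ≤ D :=
      le_trans (Multiset.toFinset_card_le _) (le_trans (Polynomial.card_roots' QF) hdegQ)
    have := le_trans hcard1 (le_trans (Finset.card_le_card himg) hcard2)
    omega
  -- products determine digits
  have hPvinj : ∀ v1 v2 : ℕ, v1 < 32 ^ D → v2 < 32 ^ D → Pv v1 = Pv v2 → v1 = v2 := by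
    intro v1 v2 hv1 hv2 hPeq
    apply digits_inj D v1 v2 hv1 hv2
    intro i hi
    have hroot1 : eval (-((letter i (dig v1 i) : ℕ) : ZMod p)) (Pv v1) = 0 := by
      rw [hPvdef]
      dsimp only
      rw [eval_prod]
      apply Finset.prod_eq_zero (Finset.mem_range.mpr hi)
      rw [eval_add, eval_X, eval_C, neg_add_cancel]
    rw [hPeq, hPvdef] at hroot1
    dsimp only at hroot1
    rw [eval_prod] at hroot1
    obtain ⟨j, hjmem, hj0⟩ := Finset.prod_eq_zero_iff.mp hroot1
    rw [eval_add, eval_X, eval_C] at hj0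
    have hnat : ((letter i (dig v1 i) : ℕ) : ZMod p) = ((letter j (dig v2 j) : ℕ) : ZMod p) := by
      have := neg_eq_of_add_eq_zero_right hj0
      rw [neg_neg] at this
      exact this
    have hlt1 : letter i (dig v1 i) < p :=
      lt_trans (hletter_ub _ _ hi (hdig32 v1 i)) (by omega)
    have hlt2 : letter j (dig v2 j) < p :=
      lt_trans (hletter_ub _ _ (Finset.mem_range.mp hjmem) (hdig32 v2 j)) (by omega)
    have heqnat : letter i (dig v1 i) = letter j (dig v2 j) := by
      have hv := congrArg ZMod.val hnat
      rwa [ZMod.val_cast_of_lt hlt1, ZMod.val_cast_of_lt hlt2] at hv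
    have hd1 : dig v1 i < 32 := hdig32 v1 i
    have hd2 : dig v2 j < 32 := hdig32 v2 j
    have hij : i = j ∧ dig v1 i = dig v2 j := by
      rw [hletter] at heqnat
      dsimp only at heqnat
      omega
    rw [hdig] at hij
    dsimp only at hij
    obtain ⟨hieq, hdeq⟩ := hij
    subst hieq
    exact hdeq
  -- the injective family of size 2^(ℓ*u)
  have h2lu32 : 2 ^ (ℓ * u) ≤ 32 ^ D := by
    calc (2:ℕ) ^ (ℓ * u) ≤ 2 ^ (5 * D) := Nat.pow_le_pow_right (by norm_num) hD5
      _ = 32 ^ D := by rw [show (32:ℕ) = 2 ^ 5 by norm_num, ← pow_mul]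
  have hinjΦ : Set.InjOn (fun v => Φz θ v) ↑(Finset.range (2 ^ (ℓ * u))) := by
    intro v1 hv1 v2 hv2 heqv
    simp only [Finset.coe_range, Set.mem_Iio] at hv1 hv2
    exact hPvinj v1 v2 (by omega) (by omega) (hQzero v1 v2 heqv)
  -- the collision polynomial
  have hθ12 : θ ^ m1 = θ ^ m2 := by
    rw [← pow_mod_orderOf θ m1, ← pow_mod_orderOf θ m2, hθordr]
    exact congrArg (θ ^ ·) hmod
  have hWroot : ∀ v, v < 2 ^ (ℓ * u) →
      ((X : F[X]) ^ m1 - X ^ m2).IsRoot (Φz θ v) := by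
    intro v _
    rw [IsRoot, eval_sub, eval_pow, eval_pow, eval_X]
    rw [hΦpow m1 (hIall a1 b1) v, hΦpow m2 (hIall a2 b2) v, hθ12, sub_self]
  have hWdeg : ((X : F[X]) ^ m1 - X ^ m2).natDegree = m1 := by
    have hstep := Polynomial.natDegree_sub_eq_left_of_natDegree_lt
      (p := (X : F[X]) ^ m1) (q := (X : F[X]) ^ m2)
      (by rw [Polynomial.natDegree_X_pow, Polynomial.natDegree_X_pow]; exact hltm)
    rwa [Polynomial.natDegree_X_pow] at hstep
  have hW0 : ((X : F[X]) ^ m1 - X ^ m2) ≠ 0 := by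
    intro hzero
    rw [hzero] at hWdeg
    simp only [Polynomial.natDegree_zero] at hWdeg
    omega
  have hcount : 2 ^ (ℓ * u) ≤ m1 := by
    have hSsub : (Finset.image (fun v => Φz θ v) (Finset.range (2 ^ (ℓ * u))))
        ⊆ ((X : F[X]) ^ m1 - X ^ m2).roots.toFinset := by
      intro x hx
      simp only [Finset.mem_image, Finset.mem_range] at hx
      obtain ⟨v, hv, rfl⟩ := hx
      rw [Multiset.mem_toFinset, mem_roots hW0]
      exact hWroot v hv
    calc 2 ^ (ℓ * u)
        = (Finset.image (fun v => Φz θ v) (Finset.range (2 ^ (ℓ * u)))).card := by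
          rw [Finset.card_image_of_injOn hinjΦ, Finset.card_range]
      _ ≤ (((X : F[X]) ^ m1 - X ^ m2).roots.toFinset).card := Finset.card_le_card hSsub
      _ ≤ Multiset.card (((X : F[X]) ^ m1 - X ^ m2).roots) := Multiset.toFinset_card_le _
      _ ≤ ((X : F[X]) ^ m1 - X ^ m2).natDegree := Polynomial.card_roots' _
      _ = m1 := hWdeg
  have hfin : N ^ u < 2 ^ (ℓ * u) := by
    calc N ^ u < (2 ^ ℓ) ^ u := Nat.pow_lt_pow_left hNlt (by omega)
      _ = 2 ^ (ℓ * u) := by rw [← pow_mul]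
  omega


set_option maxHeartbeats 1000000 in
/-- The Agrawal–Kayal–Saxena characterization of primality. -/
theorem aks_primality (N : ℕ) (hN : 2 ≤ N) :
    N.Prime ↔
      ((¬ ∃ a b : ℕ, 2 ≤ a ∧ 2 ≤ b ∧ N = a ^ b) ∧
       (¬ ∃ p : ℕ, p.Prime ∧ p ∣ N ∧ p < N ∧ p ≤ (Nat.clog 2 N) ^ 4) ∧
       (∀ r a : ℕ, 1 ≤ r → r < (Nat.clog 2 N) ^ 4 → 1 ≤ a → a < (Nat.clog 2 N) ^ 4 →
         (X ^ r - 1 : (ZMod N)[X]) ∣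
           ((X + C (a : ZMod N)) ^ N - (X ^ N + C (a : ZMod N))))) := by
  constructor
  · intro hP
    haveI : Fact N.Prime := ⟨hP⟩
    refine ⟨?_, ?_, ?_⟩
    · rintro ⟨a, b, ha, hb, hab⟩
      have hadvd : a ∣ N := hab ▸ dvd_pow_self a (by omega)
      rcases hP.eq_one_or_self_of_dvd a hadvd with h | h
      · omega
      · rw [h] at hab
        have hpow : N ^ 1 = N ^ b := by rw [pow_one]; exact hab
        have := Nat.pow_right_injective hN hpow
        omega
    · rintro ⟨q, hq, hqdvd, hqlt, _⟩
      rcases hP.eq_one_or_self_of_dvd q hqdvd with h | h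
      · have := hq.two_le; omega
      · omega
    · intro r a hr1 hrL ha1 haL
      have hzero : ((X + C (a : ZMod N)) ^ N - (X ^ N + C (a : ZMod N)) : (ZMod N)[X]) = 0 := by
        rw [add_pow_char, ← Polynomial.C_pow, ZMod.pow_card]
        ring
      rw [hzero]
      exact dvd_zero _
  · rintro ⟨h1, h2, h3⟩
    exact aks_backward N hN h1 h2 h3
end

section
/- There exists a constant C > 0 such that for every finite metric space (X, d) with |X| = n ≥ 2, there is an embedding f of X into a real Hilbert space (e.g. ℓ² of ℝ) with distortion at most C·log n; that is, for all x, y ∈ X: d(x,y) ≤ ‖f(x) − f(y)‖ ≤ C·(log n)·d(x,y). -/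
open Finset

namespace BourgainProof

set_option linter.unusedSectionVars false

variable {X : Type} [MetricSpace X] [Fintype X] [DecidableEq X]

/-- distance from a point to a finite set (0 if empty) -/
noncomputable def dS (x : X) (S : Finset X) : ℝ :=
  if h : S.Nonempty then S.inf' h (fun z => dist x z) else 0

lemma dS_nonneg (x : X) (S : Finset X) : 0 ≤ dS x S := by
  unfold dS
  split
  · next h => exact le_inf' h _ fun z _ => dist_nonneg
  · exact le_rfl

lemma dS_le {x z : X} {S : Finset X} (hz : z ∈ S) : dS x S ≤ dist x z := by
  unfold dS
  rw [dif_pos ⟨z, hz⟩]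
  exact inf'_le _ hz

lemma le_dS {x : X} {S : Finset X} {r : ℝ} (hS : S.Nonempty)
    (h : ∀ z ∈ S, r ≤ dist x z) : r ≤ dS x S := by
  unfold dS; rw [dif_pos hS]; exact le_inf' hS _ h

lemma abs_dS_sub_dS_le (x y : X) (S : Finset X) : |dS x S - dS y S| ≤ dist x y := by
  rcases S.eq_empty_or_nonempty with rfl | hS
  · simp [dS, dist_nonneg]
  · rw [abs_sub_le_iff]
    constructor
    · obtain ⟨z, hz, hez⟩ := S.exists_mem_eq_inf' hS (fun z => dist y z)
      have h1 : dS y S = dist y z := by unfold dS; rw [dif_pos hS]; exact hez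
      have h2 : dS x S ≤ dist x z := dS_le hz
      have := dist_triangle x y z
      linarith
    · obtain ⟨z, hz, hez⟩ := S.exists_mem_eq_inf' hS (fun z => dist x z)
      have h1 : dS x S = dist x z := by unfold dS; rw [dif_pos hS]; exact hez
      have h2 : dS y S ≤ dist y z := dS_le hz
      have := dist_triangle y x z
      rw [dist_comm y x] at this
      linarith

/-- weight of a subset under independent sampling with rate `p` -/
noncomputable def w (p : ℝ) (S : Finset X) : ℝ :=
  p ^ S.card * (1 - p) ^ (Fintype.card X - S.card)

lemma w_nonneg {p : ℝ} (hp0 : 0 ≤ p) (hp1 : p ≤ 1) (S : Finset X) : 0 ≤ w p S :=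
  mul_nonneg (pow_nonneg hp0 _) (pow_nonneg (by linarith) _)

lemma sum_w_powerset (p : ℝ) (s : Finset X) :
    ∑ S ∈ s.powerset, p ^ S.card * (1 - p) ^ (s.card - S.card) = 1 := by
  have h := Finset.prod_add (fun _ : X => p) (fun _ : X => (1 - p)) s
  simp only [prod_const, add_sub_cancel, one_pow] at h
  rw [show ∑ S ∈ s.powerset, p ^ S.card * (1 - p) ^ (s.card - S.card)
      = ∑ S ∈ s.powerset, p ^ S.card * (1 - p) ^ (s \ S).card from
    Finset.sum_congr rfl fun t ht => by rw [card_sdiff_of_subset (mem_powerset.mp ht)]]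
  rw [← h]

lemma sum_w (p : ℝ) : ∑ S : Finset X, w p S = 1 := by
  rw [← Finset.powerset_univ]
  simpa [w] using sum_w_powerset p (univ : Finset X)

/-- probability of missing a set `C` -/
lemma sum_w_miss (p : ℝ) (C : Finset X) :
    ∑ S : Finset X, (if S ∩ C = ∅ then w p S else 0) = (1 - p) ^ C.card := by
  classical
  rw [Finset.sum_ite, Finset.sum_const, smul_zero, add_zero]
  have hset : (univ : Finset (Finset X)).filter (fun S => S ∩ C = ∅) = (univ \ C).powerset := by
    ext S
    simp only [mem_filter, mem_univ, true_and, mem_powerset, subset_sdiff, subset_univ, true_and]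
    rw [← disjoint_iff_inter_eq_empty]
  rw [hset]
  have hC : C.card ≤ Fintype.card X := card_le_card (subset_univ C)
  have key : ∀ S ∈ (univ \ C).powerset,
      w p S = (1 - p) ^ C.card * (p ^ S.card * (1 - p) ^ ((univ \ C).card - S.card)) := by
    intro S hS
    rw [mem_powerset] at hS
    have hSc : S.card ≤ (univ \ C).card := card_le_card hS
    have hcs : (univ \ C).card = Fintype.card X - C.card := by
      rw [card_sdiff_of_subset (subset_univ C), card_univ]
    unfold w
    rw [hcs] at hSc ⊢
    have : Fintype.card X - S.card = C.card + (Fintype.card X - C.card - S.card) := by omega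
    rw [this, pow_add]
    ring
  rw [Finset.sum_congr rfl key, ← Finset.mul_sum, sum_w_powerset p (univ \ C), mul_one]



/-- lower bound on expectation via the hit-A-miss-B event -/
lemma event_ge {p : ℝ} (hp0 : 0 ≤ p) (hp1 : p ≤ 1) (A B : Finset X) (hAB : Disjoint A B)
    (h : Finset X → ℝ) (hnn : ∀ S, 0 ≤ h S) {δ : ℝ} (hδ : 0 ≤ δ)
    (hev : ∀ S : Finset X, (S ∩ A).Nonempty → S ∩ B = ∅ → δ ≤ h S) :
    δ * ((1 - p) ^ B.card - (1 - p) ^ (A.card + B.card)) ≤ ∑ S : Finset X, w p S * h S := by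
  classical
  have hw := fun S => w_nonneg hp0 hp1 (X := X) S
  -- split the miss-B probability into (hit A, miss B) and (miss A∪B)
  have hsplit : ∀ S : Finset X, (if S ∩ B = ∅ then w p S else 0)
      = (if (S ∩ A).Nonempty ∧ S ∩ B = ∅ then w p S else 0)
        + (if S ∩ (A ∪ B) = ∅ then w p S else 0) := by
    intro S
    have hun : S ∩ (A ∪ B) = (S ∩ A) ∪ (S ∩ B) := inter_union_distrib_left S A B
    by_cases hB : S ∩ B = ∅
    · by_cases hA : (S ∩ A).Nonempty
      · rw [if_pos hB, if_pos ⟨hA, hB⟩, if_neg, add_zero]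
        rw [hun, hB, union_empty]
        exact fun hc => (nonempty_iff_ne_empty.mp hA) hc
      · rw [if_pos hB, if_neg (fun hc => hA hc.1), if_pos, zero_add]
        rw [hun, hB, union_empty, not_nonempty_iff_eq_empty.mp hA]
    · rw [if_neg hB, if_neg (fun hc => hB hc.2), if_neg, add_zero]
      rw [hun]
      intro hc
      exact hB (by
        have := union_eq_empty.mp hc
        exact this.2)
  have hcard : (A ∪ B).card = A.card + B.card := card_union_of_disjoint hAB
  have hmiss1 := sum_w_miss (X := X) p B
  have hmiss2 := sum_w_miss (X := X) p (A ∪ B)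
  have hsum : ∑ S : Finset X, (if (S ∩ A).Nonempty ∧ S ∩ B = ∅ then w p S else 0)
      = (1 - p) ^ B.card - (1 - p) ^ (A.card + B.card) := by
    have := Finset.sum_congr rfl (fun S (_ : S ∈ (univ : Finset (Finset X))) => hsplit S)
    rw [Finset.sum_add_distrib] at this
    rw [hmiss1, hmiss2, hcard] at this
    linarith
  calc δ * ((1 - p) ^ B.card - (1 - p) ^ (A.card + B.card))
      = ∑ S : Finset X, δ * (if (S ∩ A).Nonempty ∧ S ∩ B = ∅ then w p S else 0) := by
        rw [← Finset.mul_sum, hsum]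
    _ ≤ ∑ S : Finset X, w p S * h S := by
        refine Finset.sum_le_sum fun S _ => ?_
        by_cases hc : (S ∩ A).Nonempty ∧ S ∩ B = ∅
        · rw [if_pos hc]
          rw [mul_comm]
          exact mul_le_mul_of_nonneg_left (hev S hc.1 hc.2) (hw S)
        · rw [if_neg hc, mul_zero]
          exact mul_nonneg (hw S) (hnn S)






lemma half_pow_mem (k : ℕ) : 0 < ((1:ℝ)/2)^(k+1) ∧ ((1:ℝ)/2)^(k+1) ≤ 1/2 := by
  constructor
  · positivity
  · have := pow_le_pow_of_le_one (by norm_num : (0:ℝ) ≤ 1/2) (by norm_num) (by omega : 1 ≤ k+1)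
    simpa using this

lemma quarter_le (k : ℕ) : (1/4 : ℝ) ≤ (1 - (1/2)^(k+1))^(2^(k+1)) := by
  induction k with
  | zero => norm_num
  | succ k ih =>
    have hp : (0:ℝ) < (1/2)^(k+2) := by positivity
    have hp2 : ((1:ℝ)/2)^(k+2) ≤ 1/2 := (half_pow_mem (k+1)).2
    have hq : (0:ℝ) ≤ 1 - (1/2)^(k+1) := by
      have := (half_pow_mem k).2; linarith
    have hsq : (1 - ((1:ℝ)/2)^(k+1)) ≤ (1 - (1/2)^(k+2))^2 := by
      have h2 : ((1:ℝ)/2)^(k+1) = 2 * (1/2)^(k+2) := by ring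
      nlinarith [sq_nonneg (((1:ℝ)/2)^(k+2))]
    calc (1/4 : ℝ) ≤ (1 - (1/2)^(k+1))^(2^(k+1)) := ih
      _ ≤ ((1 - (1/2)^(k+2))^2)^(2^(k+1)) := pow_le_pow_left₀ hq hsq _
      _ = (1 - (1/2)^(k+2))^(2^(k+2)) := by
          rw [← pow_mul]
          congr 1
          rw [pow_succ 2 (k+1)]
          ring

lemma twothirds (k : ℕ) : (1 - (1/2 : ℝ)^(k+1))^(2^k) ≤ 2/3 := by
  set p : ℝ := (1/2)^(k+1) with hp
  have hp0 : 0 < p := (half_pow_mem k).1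
  have hp1 : p ≤ 1/2 := (half_pow_mem k).2
  have hkp : (2^k : ℝ) * p = 1/2 := by
    rw [hp]
    rw [pow_succ, ← mul_assoc, mul_comm ((2:ℝ)^k) (((1:ℝ)/2)^k), ← mul_pow]
    norm_num
  have hbern : (3/2 : ℝ) ≤ (1 + p)^(2^k) := by
    have := one_add_mul_le_pow (a := p) (by linarith) (2^k)
    push_cast at this
    linarith
  have hprod : (1 - p)^(2^k) * (1 + p)^(2^k) ≤ 1 := by
    rw [← mul_pow]
    have h1 : (1 - p) * (1 + p) = 1 - p^2 := by ring
    rw [h1]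
    apply pow_le_one₀ (by nlinarith) (by nlinarith)
  have hnn : (0:ℝ) ≤ (1 - p)^(2^k) := pow_nonneg (by linarith) _
  nlinarith

lemma prob_twelfth (k : ℕ) {a b : ℕ} (ha : 2^k ≤ a) (hb : b ≤ 2^(k+1)) :
    (1/12 : ℝ) ≤ (1 - (1/2)^(k+1))^b - (1 - (1/2)^(k+1))^(a+b) := by
  set p : ℝ := (1/2)^(k+1) with hp
  have hp0 : 0 < p := (half_pow_mem k).1
  have hp1 : p ≤ 1/2 := (half_pow_mem k).2
  have h0 : (0:ℝ) ≤ 1 - p := by linarith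
  have h1 : (1:ℝ) - p ≤ 1 := by linarith
  have hB : (1/4 : ℝ) ≤ (1 - p)^b :=
    le_trans (quarter_le k) (pow_le_pow_of_le_one h0 h1 hb)
  have hA : (1 - p)^a ≤ 2/3 :=
    le_trans (pow_le_pow_of_le_one h0 h1 ha) (twothirds k)
  have hBnn : (0:ℝ) ≤ (1 - p)^b := pow_nonneg h0 _
  have : (1 - p)^(a+b) = (1-p)^a * (1-p)^b := pow_add _ _ _
  nlinarith








/-- number of points in the closed ball of radius `r` around `x` -/
noncomputable def bcard (x : X) (r : ℝ) : ℕ := (univ.filter fun z => dist x z ≤ r).card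

/-- both balls have at least `2^j` points -/
def Pj (x y : X) (j : ℕ) (r : ℝ) : Prop := 2^j ≤ bcard x r ∧ 2^j ≤ bcard y r

noncomputable instance (x y : X) (j : ℕ) : DecidablePred (Pj x y j) :=
  fun _ => instDecidableAnd

/-- all relevant radii -/
noncomputable def Dxy (x y : X) : Finset ℝ := univ.image (dist x) ∪ univ.image (dist y)

noncomputable def Tj (x y : X) (j : ℕ) : Finset ℝ := (Dxy x y).filter (Pj x y j)

noncomputable def rr (x y : X) (j : ℕ) : ℝ :=
  if h : (Tj x y j).Nonempty then min (dist x y / 2) ((Tj x y j).min' h) else dist x y / 2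

lemma Dxy_nonneg {x y : X} {r : ℝ} (hr : r ∈ Dxy x y) : 0 ≤ r := by
  simp only [Dxy, mem_union, mem_image, mem_univ, true_and] at hr
  rcases hr with ⟨z, rfl⟩ | ⟨z, rfl⟩ <;> exact dist_nonneg

lemma zero_mem_Dxy (x y : X) : (0:ℝ) ∈ Dxy x y := by
  simp only [Dxy, mem_union, mem_image, mem_univ, true_and]
  exact Or.inl ⟨x, dist_self x⟩

lemma rr_nonneg (x y : X) (j : ℕ) : 0 ≤ rr x y j := by
  unfold rr
  split
  · next h =>
    refine le_min (by positivity) ?_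
    exact Dxy_nonneg (mem_filter.mp ((Tj x y j).min'_mem h)).1
  · positivity

lemma rr_le_half (x y : X) (j : ℕ) : rr x y j ≤ dist x y / 2 := by
  unfold rr; split
  · exact min_le_left _ _
  · exact le_rfl

lemma rr_zero (x y : X) : rr x y 0 = 0 := by
  have h0 : (0:ℝ) ∈ Tj x y 0 := by
    rw [Tj, mem_filter]
    refine ⟨zero_mem_Dxy x y, ?_, ?_⟩ <;>
    · rw [pow_zero, bcard]
      exact Finset.card_pos.mpr ⟨_, mem_filter.mpr ⟨mem_univ _, by rw [dist_self]⟩⟩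
  have hne : (Tj x y 0).Nonempty := ⟨0, h0⟩
  have hmin : (Tj x y 0).min' hne = 0 := by
    apply le_antisymm (min'_le _ _ h0)
    exact Dxy_nonneg (mem_filter.mp ((Tj x y 0).min'_mem hne)).1
  rw [rr, dif_pos hne, hmin]
  exact min_eq_right (by positivity)

lemma Tj_anti {x y : X} {j j' : ℕ} (h : j ≤ j') : Tj x y j' ⊆ Tj x y j := by
  intro r hr
  rw [Tj, mem_filter] at hr ⊢
  refine ⟨hr.1, le_trans (pow_le_pow_right₀ one_le_two h) hr.2.1,
    le_trans (pow_le_pow_right₀ one_le_two h) hr.2.2⟩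

lemma rr_mono {x y : X} {j j' : ℕ} (h : j ≤ j') : rr x y j ≤ rr x y j' := by
  unfold rr
  by_cases h' : (Tj x y j').Nonempty
  · have hj : (Tj x y j).Nonempty := h'.mono (Tj_anti h)
    rw [dif_pos h', dif_pos hj]
    exact min_le_min le_rfl (min'_le _ _ (Tj_anti h (min'_mem _ h')))
  · rw [dif_neg h']
    split
    · exact min_le_left _ _
    · exact le_rfl

/-- at the top scale, the radius reaches `d/2` -/
lemma rr_top {x y : X} (hxy : x ≠ y) {m : ℕ} (hm : Fintype.card X ≤ 2^m) :
    rr x y m = dist x y / 2 := by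
  unfold rr
  split
  · next h =>
    refine min_eq_left ?_
    by_contra hc
    push_neg at hc
    -- min' < d/2 : its balls are disjoint, too many points
    set r := (Tj x y m).min' h with hr
    have hrT : r ∈ (Dxy x y).filter (Pj x y m) := (Tj x y m).min'_mem h
    obtain ⟨hrD, hx2, hy2⟩ := mem_filter.mp hrT
    have hdisj : Disjoint (univ.filter fun z => dist x z ≤ r)
        (univ.filter fun z => dist y z ≤ r) := by
      rw [Finset.disjoint_left]
      intro z hz hz'
      rw [mem_filter] at hz hz'
      have := dist_triangle x z y
      rw [dist_comm z y] at this
      have hd : dist x y ≤ 2 * r := by linarith [hz.2, hz'.2]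
      linarith
    have hle : bcard x r + bcard y r ≤ Fintype.card X := by
      unfold bcard
      rw [← Finset.card_union_of_disjoint hdisj, ← card_univ]
      exact card_le_card (subset_univ _)
    have h2m : 0 < 2^m := by positivity
    omega
  · rfl

/-- key geometric lemma: if the radius grows from scale `k` to `k+1`, there are sets
`A` (to hit) and `B` (to miss) witnessing a gap in distances to random sets. -/
lemma scale_event {x y : X} {k : ℕ} (hδ : 0 < rr x y (k+1) - rr x y k) :
    ∃ A B : Finset X, Disjoint A B ∧ 2^k ≤ A.card ∧ B.card ≤ 2^(k+1) ∧
      ∀ S : Finset X, (S ∩ A).Nonempty → S ∩ B = ∅ →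
        rr x y (k+1) - rr x y k ≤ |dS x S - dS y S| := by
  set d := dist x y with hd
  have hrk1 := rr_le_half x y (k+1)
  have hrklt : rr x y k < d / 2 := lt_of_lt_of_le (by linarith) hrk1
  -- T k is nonempty and rr k is its min
  have hTk : (Tj x y k).Nonempty := by
    by_contra hc
    rw [rr, dif_neg hc] at hrklt
    exact lt_irrefl _ hrklt
  have hrrk : rr x y k = (Tj x y k).min' hTk := by
    rw [rr, dif_pos hTk] at hrklt ⊢
    rcases min_cases (d/2) ((Tj x y k).min' hTk) with ⟨he, hle⟩ | ⟨he, hle⟩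
    · rw [he] at hrklt; exact absurd hrklt (lt_irrefl _)
    · exact he
  have hPk : Pj x y k (rr x y k) := by
    rw [hrrk]
    exact (mem_filter.mp ((Tj x y k).min'_mem hTk)).2
  -- one of the open balls of radius rr (k+1) is small
  have hsmall : ((univ.filter fun z => dist x z < rr x y (k+1)).card < 2^(k+1))
      ∨ ((univ.filter fun z => dist y z < rr x y (k+1)).card < 2^(k+1)) := by
    by_contra hc
    push_neg at hc
    obtain ⟨hcx, hcy⟩ := hc
    -- take the largest relevant radius below rr (k+1)
    have h0D : (0:ℝ) ∈ (Dxy x y).filter (· < rr x y (k+1)) := by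
      rw [mem_filter]
      exact ⟨zero_mem_Dxy x y, lt_of_le_of_lt (rr_nonneg x y k) (by linarith)⟩
    have hne : ((Dxy x y).filter (· < rr x y (k+1))).Nonempty := ⟨0, h0D⟩
    set r' := ((Dxy x y).filter (· < rr x y (k+1))).max' hne with hr'
    have hr'mem := ((Dxy x y).filter (· < rr x y (k+1))).max'_mem hne
    rw [mem_filter] at hr'mem
    have hr'lt : r' < rr x y (k+1) := hr'mem.2
    have hballx : ∀ z : X, dist x z < rr x y (k+1) → dist x z ≤ r' := by
      intro z hz
      apply le_max' _ _
      rw [mem_filter]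
      exact ⟨mem_union.mpr (Or.inl (mem_image.mpr ⟨z, mem_univ z, rfl⟩)), hz⟩
    have hbally : ∀ z : X, dist y z < rr x y (k+1) → dist y z ≤ r' := by
      intro z hz
      apply le_max' _ _
      rw [mem_filter]
      exact ⟨mem_union.mpr (Or.inr (mem_image.mpr ⟨z, mem_univ z, rfl⟩)), hz⟩
    have hPr' : r' ∈ Tj x y (k+1) := by
      rw [Tj, mem_filter]
      refine ⟨hr'mem.1, ?_, ?_⟩
      · rw [bcard]
        refine le_trans hcx (card_le_card ?_)
        intro z hz
        rw [mem_filter] at hz ⊢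
        exact ⟨hz.1, hballx z hz.2⟩
      · rw [bcard]
        refine le_trans hcy (card_le_card ?_)
        intro z hz
        rw [mem_filter] at hz ⊢
        exact ⟨hz.1, hbally z hz.2⟩
    have hTk1 : (Tj x y (k+1)).Nonempty := ⟨r', hPr'⟩
    have : rr x y (k+1) ≤ r' := by
      rw [rr, dif_pos hTk1]
      exact le_trans (min_le_right _ _) (min'_le _ _ hPr')
    linarith
  -- helper producing the conclusion given which side is small
  have main : ∀ (u v : X), dist u v = d → Pj x y k (rr x y k) →
      (2^k ≤ (univ.filter fun z => dist u z ≤ rr x y k).card) →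
      ((univ.filter fun z => dist v z < rr x y (k+1)).card < 2^(k+1)) →
      ∃ A B : Finset X, Disjoint A B ∧ 2^k ≤ A.card ∧ B.card ≤ 2^(k+1) ∧
        ∀ S : Finset X, (S ∩ A).Nonempty → S ∩ B = ∅ →
          rr x y (k+1) - rr x y k ≤ dS v S - dS u S := by
    intro u v huv _ hu hv
    refine ⟨univ.filter fun z => dist u z ≤ rr x y k,
      univ.filter fun z => dist v z < rr x y (k+1), ?_, hu, le_of_lt hv, ?_⟩
    · rw [Finset.disjoint_left]
      intro z hz hz'
      rw [mem_filter] at hz hz'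
      have htri := dist_triangle u z v
      rw [dist_comm z v] at htri
      rw [huv] at htri
      linarith [hz.2, hz'.2]
    · intro S hSA hSB
      obtain ⟨a, ha⟩ := hSA
      rw [mem_inter] at ha
      have hdu : dS u S ≤ rr x y k := le_trans (dS_le ha.1) (mem_filter.mp ha.2).2
      have hdv : rr x y (k+1) ≤ dS v S := by
        apply le_dS ⟨a, ha.1⟩
        intro z hz
        by_contra hc
        push_neg at hc
        have : z ∈ S ∩ univ.filter fun z => dist v z < rr x y (k+1) :=
          mem_inter.mpr ⟨hz, mem_filter.mpr ⟨mem_univ z, hc⟩⟩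
        rw [hSB] at this
        exact absurd this (notMem_empty z)
      linarith
  rcases hsmall with hx | hy
  · -- open ball around x small: hit ball around y, miss ball around x
    obtain ⟨A, B, h1, h2, h3, h4⟩ := main y x ((dist_comm y x).trans hd.symm) hPk hPk.2 hx
    refine ⟨A, B, h1, h2, h3, fun S hA hB => ?_⟩
    calc rr x y (k+1) - rr x y k ≤ dS x S - dS y S := h4 S hA hB
      _ ≤ |dS x S - dS y S| := le_abs_self _
  · obtain ⟨A, B, h1, h2, h3, h4⟩ := main x y hd.symm hPk hPk.1 hy
    refine ⟨A, B, h1, h2, h3, fun S hA hB => ?_⟩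
    calc rr x y (k+1) - rr x y k ≤ dS y S - dS x S := h4 S hA hB
      _ ≤ |dS x S - dS y S| := by rw [abs_sub_comm]; exact le_abs_self _


variable (x y : X)

/-- first moment at scale `k` -/
noncomputable def E1 (k : ℕ) : ℝ := ∑ S : Finset X, w ((1/2)^(k+1)) S * |dS x S - dS y S|

/-- second moment at scale `k` -/
noncomputable def E2 (k : ℕ) : ℝ := ∑ S : Finset X, w ((1/2)^(k+1)) S * (dS x S - dS y S)^2

lemma E1_nonneg (k : ℕ) : 0 ≤ E1 x y k :=
  Finset.sum_nonneg fun S _ => mul_nonneg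
    (w_nonneg (half_pow_mem k).1.le (by linarith [(half_pow_mem k).2]) S) (abs_nonneg _)

lemma E1_ge (k : ℕ) : (rr x y (k+1) - rr x y k) / 12 ≤ E1 x y k := by
  rcases le_or_gt (rr x y (k+1) - rr x y k) 0 with h | h
  · exact le_trans (by linarith) (E1_nonneg x y k)
  · obtain ⟨A, B, hAB, hA, hB, hev⟩ := scale_event h
    set p : ℝ := (1/2)^(k+1) with hp
    have hp0 : (0:ℝ) ≤ p := (half_pow_mem k).1.le
    have hp1 : p ≤ 1 := by linarith [(half_pow_mem k).2]
    have h1 := event_ge hp0 hp1 A B hAB (fun S => |dS x S - dS y S|)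
      (fun S => abs_nonneg _) h.le hev
    have h2 := prob_twelfth k hA hB
    calc (rr x y (k+1) - rr x y k) / 12
        = (rr x y (k+1) - rr x y k) * (1/12) := by ring
      _ ≤ (rr x y (k+1) - rr x y k) * ((1 - p) ^ B.card - (1 - p) ^ (A.card + B.card)) :=
          mul_le_mul_of_nonneg_left h2 h.le
      _ ≤ E1 x y k := h1

lemma sum_E1_ge (hxy : x ≠ y) {m : ℕ} (hm : Fintype.card X ≤ 2^m) :
    dist x y / 24 ≤ ∑ k ∈ Finset.range m, E1 x y k := by
  have htel : ∑ k ∈ Finset.range m, (rr x y (k+1) - rr x y k) = rr x y m - rr x y 0 :=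
    Finset.sum_range_sub (rr x y) m
  have h1 : ∑ k ∈ Finset.range m, (rr x y (k+1) - rr x y k) / 12
      ≤ ∑ k ∈ Finset.range m, E1 x y k :=
    Finset.sum_le_sum fun k _ => E1_ge x y k
  rw [← Finset.sum_div, htel, rr_top hxy hm, rr_zero] at h1
  calc dist x y / 24 = (dist x y / 2 - 0) / 12 := by ring
    _ ≤ _ := h1

lemma E1_sq_le_E2 (k : ℕ) : (E1 x y k)^2 ≤ E2 x y k := by
  set p : ℝ := (1/2)^(k+1) with hp
  have hp0 : (0:ℝ) ≤ p := (half_pow_mem k).1.le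
  have hp1 : p ≤ 1 := by linarith [(half_pow_mem k).2]
  have hcs := Finset.sum_mul_sq_le_sq_mul_sq Finset.univ
    (fun S : Finset X => Real.sqrt (w p S))
    (fun S : Finset X => Real.sqrt (w p S) * |dS x S - dS y S|)
  have he1 : ∀ S : Finset X, Real.sqrt (w p S) * (Real.sqrt (w p S) * |dS x S - dS y S|)
      = w p S * |dS x S - dS y S| := by
    intro S
    rw [← mul_assoc, Real.mul_self_sqrt (w_nonneg hp0 hp1 S)]
  have he2 : ∀ S : Finset X, (Real.sqrt (w p S))^2 = w p S := fun S =>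
    Real.sq_sqrt (w_nonneg hp0 hp1 S)
  have he3 : ∀ S : Finset X, (Real.sqrt (w p S) * |dS x S - dS y S|)^2
      = w p S * (dS x S - dS y S)^2 := by
    intro S
    rw [mul_pow, he2, sq_abs]
  simp only [he1, he2, he3] at hcs
  rw [sum_w, one_mul] at hcs
  exact hcs

lemma sum_E2_ge (hxy : x ≠ y) {m : ℕ} (hm : Fintype.card X ≤ 2^m) (hm0 : 0 < m) :
    (dist x y)^2 / (576 * m) ≤ ∑ k ∈ Finset.range m, E2 x y k := by
  have h1 : ∑ k ∈ Finset.range m, (E1 x y k)^2 ≤ ∑ k ∈ Finset.range m, E2 x y k :=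
    Finset.sum_le_sum fun k _ => E1_sq_le_E2 x y k
  have hcs := Finset.sum_mul_sq_le_sq_mul_sq (Finset.range m)
    (fun _ => (1:ℝ)) (fun k => E1 x y k)
  simp only [one_pow, one_mul, Finset.sum_const, Finset.card_range, nsmul_eq_mul, mul_one] at hcs
  have h2 : (dist x y / 24)^2 ≤ (∑ k ∈ Finset.range m, E1 x y k)^2 := by
    apply pow_le_pow_left₀ (by positivity) (sum_E1_ge x y hxy hm)
  have hmpos : (0:ℝ) < m := Nat.cast_pos.mpr hm0
  rw [div_le_iff₀ (by positivity)]
  calc (dist x y)^2 = (dist x y / 24)^2 * 576 := by ring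
    _ ≤ (∑ k ∈ Finset.range m, E1 x y k)^2 * 576 := by nlinarith
    _ ≤ (m * ∑ k ∈ Finset.range m, (E1 x y k)^2) * 576 := by nlinarith
    _ ≤ (∑ k ∈ Finset.range m, E2 x y k) * (576 * m) := by nlinarith

lemma E2_le (k : ℕ) : E2 x y k ≤ (dist x y)^2 := by
  set p : ℝ := (1/2)^(k+1) with hp
  have hp0 : (0:ℝ) ≤ p := (half_pow_mem k).1.le
  have hp1 : p ≤ 1 := by linarith [(half_pow_mem k).2]
  calc E2 x y k ≤ ∑ S : Finset X, w p S * (dist x y)^2 := by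
        refine Finset.sum_le_sum fun S _ => ?_
        refine mul_le_mul_of_nonneg_left ?_ (w_nonneg hp0 hp1 S)
        rw [← sq_abs (dS x S - dS y S)]
        apply pow_le_pow_left₀ (abs_nonneg _) (abs_dS_sub_dS_le x y S)
    _ = (dist x y)^2 := by rw [← Finset.sum_mul, sum_w, one_mul]

lemma sum_E2_le {m : ℕ} : ∑ k ∈ Finset.range m, E2 x y k ≤ m * (dist x y)^2 := by
  calc ∑ k ∈ Finset.range m, E2 x y k ≤ ∑ k ∈ Finset.range m, (dist x y)^2 :=
      Finset.sum_le_sum fun k _ => E2_le x y k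
    _ = m * (dist x y)^2 := by rw [Finset.sum_const, Finset.card_range, nsmul_eq_mul]

noncomputable def eN : ℕ → lp (fun _ : ℕ => ℝ) 2 := fun n => lp.single 2 n 1

lemma orthonormal_eN : Orthonormal ℝ eN := by
  rw [orthonormal_iff_ite]
  intro i j
  unfold eN
  rw [lp.inner_single_left]
  rw [RCLike.inner_apply, map_one, mul_one]
  rcases eq_or_ne i j with rfl | hij
  · rw [lp.single_apply_self, if_pos rfl]
  · rw [lp.single_apply_ne _ _ _ hij, if_neg hij]
/-- norm of an orthonormal combination -/
lemma norm_comb {I : Type} [Fintype I] (κ : I → ℕ) (hκ : Function.Injective κ) (a : I → ℝ) :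
    ‖∑ i : I, a i • eN (κ i)‖^2 = ∑ i : I, (a i)^2 := by
  have hON : Orthonormal ℝ (eN ∘ κ) := (orthonormal_eN).comp κ hκ
  have h := hON.inner_sum a a Finset.univ
  simp only [Function.comp_apply] at h
  rw [real_inner_self_eq_norm_sq] at h
  rw [h]
  refine Finset.sum_congr rfl fun i _ => ?_
  simp [sq, starRingEnd_apply]

end BourgainProof

/-- Bourgain's embedding theorem: every `n`-point metric space embeds into the real
Hilbert space `ℓ²` with distortion `O(log n)`. -/
theorem bourgain_embedding :
    ∃ C : ℝ, 0 < C ∧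
      ∀ (X : Type) [MetricSpace X] [Fintype X], 2 ≤ Fintype.card X →
        ∃ f : X → lp (fun _ : ℕ => ℝ) 2,
          ∀ x y : X,
            dist x y ≤ ‖f x - f y‖ ∧
            ‖f x - f y‖ ≤ C * Real.log (Fintype.card X) * dist x y := by
  classical
  refine ⟨70, by norm_num, ?_⟩
  intro X _ _ hcard
  classical
  open BourgainProof in
  set n := Fintype.card X with hn
  set m := Nat.clog 2 n with hmdef
  have hm0 : 0 < m := Nat.clog_pos one_lt_two hcard
  have hmn : n ≤ 2^m := Nat.le_pow_clog one_lt_two n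
  set κ : Fin m × Finset X → ℕ := fun i => ((Fintype.equivFin (Fin m × Finset X)) i : ℕ)
    with hκdef
  have hκ : Function.Injective κ := fun i j h =>
    (Fintype.equivFin (Fin m × Finset X)).injective (Fin.val_injective h)
  set c : Fin m × Finset X → X → ℝ := fun i z =>
    Real.sqrt (BourgainProof.w ((1/2)^((i.1 : ℕ)+1)) i.2) * BourgainProof.dS z i.2 with hc
  set t : ℝ := 24 * Real.sqrt m with ht
  have htnn : 0 ≤ t := by positivity
  have ht2 : t^2 = 576 * m := by
    rw [ht, mul_pow, Real.sq_sqrt (Nat.cast_nonneg m)]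
    norm_num
  set f : X → lp (fun _ : ℕ => ℝ) 2 := fun z =>
    ∑ i : Fin m × Finset X, (t * c i z) • BourgainProof.eN (κ i) with hf
  refine ⟨f, fun x y => ?_⟩
  -- trivial case x = y
  rcases eq_or_ne x y with rfl | hxy
  · simp
  -- norm computation
  have hdiff : f x - f y
      = ∑ i : Fin m × Finset X, (t * c i x - t * c i y) • BourgainProof.eN (κ i) := by
    rw [hf]
    rw [← Finset.sum_sub_distrib]
    refine Finset.sum_congr rfl fun i _ => ?_
    rw [sub_smul]
  have hnorm : ‖f x - f y‖^2 = ∑ i : Fin m × Finset X, (t * c i x - t * c i y)^2 := by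
    rw [hdiff]; exact BourgainProof.norm_comb κ hκ _
  have hkey : ‖f x - f y‖^2 = t^2 * ∑ k ∈ Finset.range m, BourgainProof.E2 x y k := by
    rw [hnorm]
    rw [Fintype.sum_prod_type]
    rw [Finset.mul_sum, ← Fin.sum_univ_eq_sum_range (fun k => t^2 * BourgainProof.E2 x y k) m]
    refine Finset.sum_congr rfl fun k _ => ?_
    rw [BourgainProof.E2, Finset.mul_sum]
    refine Finset.sum_congr rfl fun S _ => ?_
    have hp0 : (0:ℝ) ≤ (1/2)^((k:ℕ)+1) := (BourgainProof.half_pow_mem _).1.le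
    have hp1 : ((1:ℝ)/2)^((k:ℕ)+1) ≤ 1 := by linarith [(BourgainProof.half_pow_mem (k:ℕ)).2]
    have hwnn : 0 ≤ BourgainProof.w ((1/2)^((k:ℕ)+1)) S := BourgainProof.w_nonneg hp0 hp1 S
    have h1 : t * c (k, S) x - t * c (k, S) y
        = t * Real.sqrt (BourgainProof.w ((1/2)^((k:ℕ)+1)) S)
          * (BourgainProof.dS x S - BourgainProof.dS y S) := by
      rw [hc]; ring
    rw [h1, mul_pow, mul_pow, Real.sq_sqrt hwnn]
    ring
  have hd0 : (0:ℝ) < dist x y := dist_pos.mpr hxy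
  -- lower bound
  have hlow : dist x y ≤ ‖f x - f y‖ := by
    have hQ := BourgainProof.sum_E2_ge x y hxy hmn hm0
    have hmr : (0:ℝ) < m := Nat.cast_pos.mpr hm0
    have h2 : dist x y ^ 2 ≤ ‖f x - f y‖^2 := by
      rw [hkey, ht2]
      rw [div_le_iff₀ (by positivity)] at hQ
      nlinarith
    calc dist x y = Real.sqrt (dist x y ^ 2) := (Real.sqrt_sq dist_nonneg).symm
      _ ≤ Real.sqrt (‖f x - f y‖^2) := Real.sqrt_le_sqrt h2
      _ = ‖f x - f y‖ := Real.sqrt_sq (norm_nonneg _)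
  refine ⟨hlow, ?_⟩
  -- upper bound
  have hup : ‖f x - f y‖ ≤ 24 * m * dist x y := by
    have hQ := BourgainProof.sum_E2_le x y (m := m)
    have h2 : ‖f x - f y‖^2 ≤ (24 * m * dist x y)^2 := by
      rw [hkey, ht2]
      nlinarith [Nat.cast_nonneg (α := ℝ) m]
    calc ‖f x - f y‖ = Real.sqrt (‖f x - f y‖^2) := (Real.sqrt_sq (norm_nonneg _)).symm
      _ ≤ Real.sqrt ((24 * m * dist x y)^2) := Real.sqrt_le_sqrt h2
      _ = 24 * m * dist x y := Real.sqrt_sq (by positivity)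
  refine le_trans hup ?_
  -- 24 m ≤ 70 log n
  have hlog2 : (0:ℝ) < Real.log 2 := Real.log_pos one_lt_two
  have hlogn : Real.log 2 ≤ Real.log n :=
    Real.log_le_log (by norm_num) (by exact_mod_cast hcard)
  have hpred : 2^(m-1) < n := Nat.pow_pred_clog_lt_self one_lt_two hcard
  have hpredR : ((2:ℝ))^((m-1 : ℕ)) ≤ (n:ℝ) := by exact_mod_cast hpred.le
  have hlogpred : ((m-1:ℕ):ℝ) * Real.log 2 ≤ Real.log n := by
    rw [← Real.log_pow]
    exact Real.log_le_log (by positivity) hpredR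
  have hcast : ((m-1:ℕ):ℝ) = (m:ℝ) - 1 := by
    rw [Nat.cast_sub hm0, Nat.cast_one]
  rw [hcast] at hlogpred
  have hd9 := Real.log_two_gt_d9
  have hmb : 24*(m:ℝ)*Real.log 2 ≤ 48 * Real.log n := by nlinarith
  have hmain : 24*(m:ℝ) ≤ 70 * Real.log n := by
    have h3 : (24*(m:ℝ)) * Real.log 2 ≤ (70*Real.log n) * Real.log 2 := by nlinarith
    exact le_of_mul_le_mul_right h3 hlog2
  calc 24 * (m:ℝ) * dist x y ≤ 70 * Real.log n * dist x y :=
      mul_le_mul_of_nonneg_right hmain hd0.le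
    _ = 70 * Real.log n * dist x y := rfl
end

section
/- There exists a constant c > 0 such that for every n ≥ 2 and every function f : {−1,1}ⁿ → {−1,1} with E[f(x)] = 0 under the uniform distribution, there exists a coordinate i ∈ {1,…,n} whose influence satisfies I_i(f) ≥ c · (log n) / n. -/
open Finset

namespace KKL

noncomputable def e (b : Bool) : ℝ := if b then -1 else 1

lemma e_mul_self (b : Bool) : e b * e b = 1 := by cases b <;> simp [e]

noncomputable def chi {n : ℕ} (s x : Fin n → Bool) : ℝ :=
  ∏ i, if s i then e (x i) else 1

def wt {n : ℕ} (s : Fin n → Bool) : ℕ := ∑ i, if s i then 1 else 0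

lemma sum_factor {n : ℕ} (F : Fin n → Bool → ℝ) :
    ∑ x : Fin n → Bool, ∏ i, F i (x i) = ∏ i, (F i false + F i true) := by
  classical
  have h : ∀ i : Fin n, F i false + F i true = ∑ b : Bool, F i b := by
    intro i; rw [Fintype.sum_bool]; ring
  simp only [h]
  rw [Finset.prod_univ_sum]
  rw [Fintype.piFinset_univ]

lemma sum_chi_mul_chi {n : ℕ} (s t : Fin n → Bool) :
    ∑ x : Fin n → Bool, chi s x * chi t x = if s = t then (2:ℝ)^n else 0 := by
  classical
  have h1 : ∀ x : Fin n → Bool, chi s x * chi t x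
      = ∏ i, ((if s i then e (x i) else 1) * (if t i then e (x i) else 1)) := by
    intro x; rw [chi, chi, ← Finset.prod_mul_distrib]
  simp only [h1]
  rw [sum_factor (fun i b => (if s i then e b else 1) * (if t i then e b else 1))]
  have h2 : ∀ i : Fin n,
      ((if s i then e false else 1) * (if t i then e false else 1)
        + (if s i then e true else 1) * (if t i then e true else 1))
      = if s i = t i then 2 else 0 := by
    intro i; cases hs : s i <;> cases ht : t i <;> simp [e] <;> ring
  rw [Finset.prod_congr rfl (fun i _ => h2 i)]
  by_cases hst : s = t
  · subst hst; simp [Finset.prod_const]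
  · obtain ⟨i, hi⟩ := Function.ne_iff.1 hst
    rw [Finset.prod_eq_zero (Finset.mem_univ i) (by simp [hi]), if_neg hst]

lemma sum_chi_chi_delta {n : ℕ} (x y : Fin n → Bool) :
    ∑ s : Fin n → Bool, chi s x * chi s y = if x = y then (2:ℝ)^n else 0 := by
  classical
  have h1 : ∀ s : Fin n → Bool, chi s x * chi s y
      = ∏ i, (if s i then e (x i) * e (y i) else 1) := by
    intro s; rw [chi, chi, ← Finset.prod_mul_distrib]
    refine Finset.prod_congr rfl fun i _ => ?_
    cases s i <;> simp
  simp only [h1]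
  rw [sum_factor (fun i b => if b then e (x i) * e (y i) else 1)]
  have h2 : ∀ i : Fin n,
      ((if (false:Bool) = true then e (x i) * e (y i) else 1)
        + if (true:Bool) = true then e (x i) * e (y i) else 1)
      = if x i = y i then 2 else 0 := by
    intro i; cases hx : x i <;> cases hy : y i <;> simp [e] <;> ring
  rw [Finset.prod_congr rfl (fun i _ => h2 i)]
  by_cases hxy : x = y
  · subst hxy; simp [Finset.prod_const]
  · obtain ⟨i, hi⟩ := Function.ne_iff.1 hxy
    rw [Finset.prod_eq_zero (Finset.mem_univ i) (by simp [hi]), if_neg hxy]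

noncomputable def coef {n : ℕ} (g : (Fin n → Bool) → ℝ) (s : Fin n → Bool) : ℝ :=
  (∑ x, g x * chi s x) / 2^n

lemma expansion {n : ℕ} (g : (Fin n → Bool) → ℝ) (x : Fin n → Bool) :
    g x = ∑ s, coef g s * chi s x := by
  simp only [coef, div_mul_eq_mul_div, Finset.sum_mul, ← Finset.sum_div]
  rw [Finset.sum_comm]
  have h : ∀ y : Fin n → Bool,
      ∑ s : Fin n → Bool, g y * chi s y * chi s x
        = g y * if y = x then (2:ℝ)^n else 0 := by
    intro y
    rw [← sum_chi_chi_delta y x, Finset.mul_sum]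
    exact Finset.sum_congr rfl fun s _ => by ring
  rw [Finset.sum_congr rfl fun y _ => h y]
  rw [Finset.sum_congr rfl (fun y (_ : y ∈ univ) => mul_ite (y = x) (g y) ((2:ℝ)^n) 0)]
  simp only [mul_zero]
  rw [Finset.sum_ite_eq' univ x (fun y => g y * 2^n)]
  rw [if_pos (Finset.mem_univ x)]
  have h2n : (2:ℝ)^n ≠ 0 := by positivity
  field_simp

lemma plancherel {n : ℕ} (u v : (Fin n → Bool) → ℝ) :
    ∑ x, u x * v x = 2^n * ∑ s, coef u s * coef v s := by
  have h : ∀ x, u x * v x = u x * ∑ s, coef v s * chi s x := by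
    intro x; rw [← expansion]
  rw [Finset.sum_congr rfl fun x _ => h x]
  simp only [Finset.mul_sum]
  rw [Finset.sum_comm]
  have h2 : ∀ s : Fin n → Bool,
      (∑ x, u x * (coef v s * chi s x)) = 2^n * (coef u s * coef v s) := by
    intro s
    have h3 : (∑ x, u x * (coef v s * chi s x)) = coef v s * ∑ x, u x * chi s x := by
      rw [Finset.mul_sum]; exact Finset.sum_congr rfl fun x _ => by ring
    rw [h3]
    simp only [coef]
    have h2n : (2:ℝ)^n ≠ 0 := by positivity
    field_simp
  rw [Finset.sum_congr rfl fun s _ => h2 s, ← Finset.mul_sum]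

lemma coef_combo {n : ℕ} (w : (Fin n → Bool) → ℝ) (t : Fin n → Bool) :
    coef (fun x => ∑ s, w s * chi s x) t = w t := by
  simp only [coef, Finset.sum_mul]
  rw [Finset.sum_comm]
  have h : ∀ s : Fin n → Bool,
      (∑ x, w s * chi s x * chi t x) = w s * if s = t then (2:ℝ)^n else 0 := by
    intro s
    rw [← sum_chi_mul_chi s t, Finset.mul_sum]
    exact Finset.sum_congr rfl fun x _ => by ring
  rw [Finset.sum_congr rfl fun s _ => h s]
  rw [Finset.sum_congr rfl (fun s (_ : s ∈ univ) => mul_ite (s = t) (w s) ((2:ℝ)^n) 0)]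
  simp only [mul_zero]
  rw [Finset.sum_ite_eq' univ t (fun s => w s * 2^n)]
  rw [if_pos (Finset.mem_univ t)]
  have h2n : (2:ℝ)^n ≠ 0 := by positivity
  field_simp

lemma sum_pi_succ {n : ℕ} (G : (Fin (n+1) → Bool) → ℝ) :
    ∑ x : Fin (n+1) → Bool, G x
      = ∑ y : Fin n → Bool, (G (Fin.cons false y) + G (Fin.cons true y)) := by
  rw [← Equiv.sum_comp (Fin.consEquiv (fun _ => Bool)) G]
  rw [Fintype.sum_prod_type_right]
  refine Finset.sum_congr rfl fun y _ => ?_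
  rw [Fintype.sum_bool]
  exact add_comm _ _

lemma chi_cons {n : ℕ} (c : Bool) (s : Fin n → Bool) (b : Bool) (x : Fin n → Bool) :
    chi (Fin.cons c s) (Fin.cons b x) = (if c then e b else 1) * chi s x := by
  rw [chi, Fin.prod_univ_succ]
  simp [chi]

lemma wt_cons {n : ℕ} (c : Bool) (s : Fin n → Bool) :
    wt (Fin.cons c s) = (if c then 1 else 0) + wt s := by
  rw [wt, Fin.sum_univ_succ]
  simp [wt]

theorem bonami (ρ : ℝ) (h0 : 0 ≤ ρ) (h3 : ρ^2 ≤ 1/3) :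
    ∀ (n : ℕ) (w : (Fin n → Bool) → ℝ),
      ∑ x, (∑ s, ρ^(wt s) * w s * chi s x)^4 ≤ 2^n * (∑ s, w s^2)^2 := by
  intro n
  induction n with
  | zero =>
      intro w
      have h1 : ∀ s x : Fin 0 → Bool, chi s x = 1 := by
        intro s x; rw [chi]; exact Finset.prod_of_isEmpty _
      have h2 : ∀ s : Fin 0 → Bool, wt s = 0 := by
        intro s; rw [wt]; exact Finset.sum_of_isEmpty _
      simp only [h1, h2, pow_zero, one_mul, mul_one]
      rw [Fintype.sum_subsingleton _ (fun _ => false), Fintype.sum_subsingleton _ (fun _ => false),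
        Fintype.sum_subsingleton _ (fun _ => false)]
      exact le_of_eq (by ring)
  | succ n ih =>
      intro w
      set w0 : (Fin n → Bool) → ℝ := fun s => w (Fin.cons false s) with hw0
      set w1 : (Fin n → Bool) → ℝ := fun s => w (Fin.cons true s) with hw1
      set U : (Fin n → Bool) → ℝ := fun y => ∑ s, ρ^(wt s) * w0 s * chi s y with hU
      set V : (Fin n → Bool) → ℝ := fun y => ∑ s, ρ^(wt s) * w1 s * chi s y with hV
      have inner : ∀ (b : Bool) (y : Fin n → Bool),
          (∑ s : Fin (n+1) → Bool, ρ^(wt s) * w s * chi s (Fin.cons b y))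
            = U y + (cond b (-ρ) ρ) * V y := by
        intro b y
        rw [sum_pi_succ (fun s => ρ^(wt s) * w s * chi s (Fin.cons b y))]
        have h1 : ∀ s : Fin n → Bool,
            ρ^(wt (Fin.cons false s)) * w (Fin.cons false s) * chi (Fin.cons false s) (Fin.cons b y)
            = ρ^(wt s) * w0 s * chi s y := by
          intro s; rw [wt_cons, chi_cons]; simp [hw0]
        have h2 : ∀ s : Fin n → Bool,
            ρ^(wt (Fin.cons true s)) * w (Fin.cons true s) * chi (Fin.cons true s) (Fin.cons b y)
            = (cond b (-ρ) ρ) * (ρ^(wt s) * w1 s * chi s y) := by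
          intro s; rw [wt_cons, chi_cons]
          cases b <;> simp [hw1, e, pow_succ] <;> ring
        rw [Finset.sum_congr rfl fun s _ => by rw [h1 s, h2 s]]
        rw [Finset.sum_add_distrib, ← Finset.mul_sum]
      -- LHS
      rw [sum_pi_succ (fun x => (∑ s, ρ^(wt s) * w s * chi s x)^4)]
      have hsplit : ∀ y : Fin n → Bool,
          (∑ s : Fin (n+1) → Bool, ρ^(wt s) * w s * chi s (Fin.cons false y))^4
          + (∑ s : Fin (n+1) → Bool, ρ^(wt s) * w s * chi s (Fin.cons true y))^4
          = 2*(U y)^4 + 12*ρ^2*((U y)^2*(V y)^2) + 2*ρ^4*(V y)^4 := by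
        intro y; rw [inner false y, inner true y]
        simp only [Bool.cond_false, Bool.cond_true]; ring
      rw [Finset.sum_congr rfl fun y _ => hsplit y]
      have hU2 : 0 ≤ ∑ s, w0 s^2 := Finset.sum_nonneg fun s _ => sq_nonneg _
      have hV2 : 0 ≤ ∑ s, w1 s^2 := Finset.sum_nonneg fun s _ => sq_nonneg _
      have hU4 := ih w0
      have hV4 := ih w1
      have hUV : ∑ y, (U y)^2 * (V y)^2 ≤ 2^n * ((∑ s, w0 s^2) * (∑ s, w1 s^2)) := by
        have cs := Finset.sum_mul_sq_le_sq_mul_sq univ (fun y => (U y)^2) (fun y => (V y)^2)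
        have h4 : (∑ y, (U y)^2 * (V y)^2)^2 ≤ (2^n * ((∑ s, w0 s^2) * (∑ s, w1 s^2)))^2 := by
          calc (∑ y, (U y)^2 * (V y)^2)^2
              ≤ (∑ y, ((U y)^2)^2) * ∑ y, ((V y)^2)^2 := cs
            _ ≤ (2^n * (∑ s, w0 s^2)^2) * (2^n * (∑ s, w1 s^2)^2) := by
                apply mul_le_mul
                · convert hU4 using 2 with y; rfl; ring
                · convert hV4 using 2 with y; rfl; ring
                · exact Finset.sum_nonneg fun y _ => by positivity
                · positivity
            _ = (2^n * ((∑ s, w0 s^2) * (∑ s, w1 s^2)))^2 := by ring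
        have h5 : 0 ≤ ∑ y, (U y)^2 * (V y)^2 := Finset.sum_nonneg fun y _ => by positivity
        have h6 : (0:ℝ) ≤ 2^n * ((∑ s, w0 s^2) * (∑ s, w1 s^2)) := by positivity
        exact (pow_le_pow_iff_left₀ h5 h6 (by norm_num)).1 h4
      have hρ4 : ρ^4 ≤ 1 := by nlinarith
      have hsum : (∑ s : Fin (n+1) → Bool, w s^2)
          = (∑ s, w0 s^2) + (∑ s, w1 s^2) := by
        rw [sum_pi_succ (fun s => w s^2)]
        rw [Finset.sum_add_distrib]
      calc ∑ y, (2*(U y)^4 + 12*ρ^2*((U y)^2*(V y)^2) + 2*ρ^4*(V y)^4)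
          = 2*(∑ y, (U y)^4) + 12*ρ^2*(∑ y, (U y)^2*(V y)^2) + 2*ρ^4*(∑ y, (V y)^4) := by
            simp only [Finset.sum_add_distrib, ← Finset.mul_sum]
        _ ≤ 2*(2^n * (∑ s, w0 s^2)^2) + 4*(2^n * ((∑ s, w0 s^2) * (∑ s, w1 s^2)))
              + 2*(2^n * (∑ s, w1 s^2)^2) := by
            have hs1 : 0 ≤ ∑ y, (U y)^2*(V y)^2 := Finset.sum_nonneg fun y _ => by positivity
            have hs2 : 0 ≤ ∑ y, (V y)^4 := Finset.sum_nonneg fun y _ => by positivity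
            have h12 : 12*ρ^2*(∑ y, (U y)^2*(V y)^2) ≤ 4*(∑ y, (U y)^2*(V y)^2) := by nlinarith
            have h2ρ : 2*ρ^4*(∑ y, (V y)^4) ≤ 2*(∑ y, (V y)^4) := by nlinarith
            have hUf : (∑ y, (U y)^4) ≤ 2^n * (∑ s, w0 s^2)^2 := hU4
            have hVf : (∑ y, (V y)^4) ≤ 2^n * (∑ s, w1 s^2)^2 := hV4
            linarith [hUV]
        _ ≤ 2^(n+1) * ((∑ s : Fin (n+1) → Bool, w s^2))^2 := by
            rw [hsum]
            exact le_of_eq (by ring)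

section Deriv

variable {n : ℕ}

lemma flip_invol (i : Fin n) : Function.Involutive
    (fun x : Fin n → Bool => Function.update x i (!(x i))) := by
  intro x
  simp only [Function.update_self, Function.update_idem, Bool.not_not]
  exact Function.update_eq_self i x

lemma sum_flip (i : Fin n) (G : (Fin n → Bool) → ℝ) :
    ∑ s : Fin n → Bool, G s
      = ∑ s : Fin n → Bool, G (Function.update s i (!(s i))) := by
  exact (Fintype.sum_equiv ((flip_invol i).toPerm _) _ _ (fun s => rfl)).symm

lemma chi_update (s x : Fin n → Bool) (i : Fin n) (b : Bool) :
    chi s (Function.update x i b)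
      = (if s i then e b else 1) * chi (Function.update s i false) x := by
  rw [chi, chi, ← Finset.mul_prod_erase univ _ (Finset.mem_univ i)]
  rw [← Finset.mul_prod_erase univ
    (fun j => if (Function.update s i false) j then e (x j) else 1) (Finset.mem_univ i)]
  simp only [Function.update_self]
  rw [if_neg (by simp : ¬(false = true))]
  rw [one_mul]
  congr 1
  refine Finset.prod_congr rfl fun j hj => ?_
  have hji : j ≠ i := Finset.ne_of_mem_erase hj
  rw [Function.update_of_ne hji, Function.update_of_ne hji]

lemma wt_update (s : Fin n → Bool) (i : Fin n) (h : s i = false) :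
    wt (Function.update s i true) = wt s + 1 := by
  rw [wt, wt]
  rw [← Finset.sum_erase_add _ _ (Finset.mem_univ i),
      ← Finset.sum_erase_add _ (fun j => if s j then 1 else 0) (Finset.mem_univ i)]
  simp only [Function.update_self, h]
  have : ∀ j ∈ univ.erase i,
      (if (Function.update s i true) j then 1 else 0) = if s j then 1 else 0 := by
    intro j hj; rw [Function.update_of_ne (Finset.ne_of_mem_erase hj)]
  rw [Finset.sum_congr rfl this]
  norm_num

lemma wt_eq_zero (s : Fin n → Bool) (h : wt s = 0) : s = fun _ => false := by
  funext i
  by_contra hi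
  have hsi : s i = true := by revert hi; cases s i <;> simp
  have h2 := Finset.sum_eq_zero_iff.mp (by rw [← wt]; exact h) i (Finset.mem_univ i)
  rw [hsi] at h2
  simp at h2

variable (f : (Fin n → Bool) → Bool)

noncomputable def F : (Fin n → Bool) → ℝ := fun x => if f x then 1 else -1

noncomputable def g (i : Fin n) : (Fin n → Bool) → ℝ := fun x =>
  (F f (Function.update x i false) - F f (Function.update x i true))/2

noncomputable def dcoef (i : Fin n) (t : Fin n → Bool) : ℝ :=
  if t i then 0 else coef (F f) (Function.update t i true)

lemma g_vals (i : Fin n) (x : Fin n → Bool) :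
    g f i x = 0 ∨ g f i x = 1 ∨ g f i x = -1 := by
  simp only [g, F]
  cases f (Function.update x i false) <;> cases f (Function.update x i true) <;> norm_num

lemma g_abs (i : Fin n) (x : Fin n → Bool) : |g f i x| = (g f i x)^2 := by
  rcases g_vals f i x with h | h | h <;> rw [h] <;> norm_num

lemma g_sq_sq (i : Fin n) (x : Fin n → Bool) : (g f i x)^4 = (g f i x)^2 := by
  rcases g_vals f i x with h | h | h <;> rw [h] <;> norm_num

lemma g_combo (i : Fin n) (x : Fin n → Bool) :
    g f i x = ∑ t, dcoef f i t * chi t x := by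
  have h1 : g f i x = ∑ s, (if s i then coef (F f) s * chi (Function.update s i false) x else 0) := by
    rw [g, expansion (F f) (Function.update x i false), expansion (F f) (Function.update x i true)]
    rw [← Finset.sum_sub_distrib, Finset.sum_div]
    refine Finset.sum_congr rfl fun s _ => ?_
    rw [chi_update, chi_update]
    cases hs : s i
    · simp
    · simp only [if_pos rfl, e]
      norm_num
  rw [h1, sum_flip i]
  refine Finset.sum_congr rfl fun t _ => ?_
  simp only [Function.update_self, dcoef]
  cases ht : t i
  · simp only [Bool.not_false, if_pos rfl, if_neg (by simp [ht] : ¬(t i = true))]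
    have h2 : Function.update (Function.update t i true) i false = t := by
      rw [Function.update_idem, ← ht]
      exact Function.update_eq_self i t
    rw [h2]
    norm_num
  · simp only [Bool.not_true, if_neg (by simp : ¬(false = true)), if_pos ht]
    simp

lemma coef_g (i : Fin n) : coef (g f i) = dcoef f i := by
  have h : g f i = fun x => ∑ t, dcoef f i t * chi t x := funext (g_combo f i)
  funext t
  rw [h, coef_combo]

lemma sum_reindex (i : Fin n) (h : (Fin n → Bool) → ℝ) :
    ∑ t : Fin n → Bool, (if t i then (0:ℝ) else h (Function.update t i true))
      = ∑ s : Fin n → Bool, (if s i then h s else 0) := by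
  rw [sum_flip i (fun t => if t i then (0:ℝ) else h (Function.update t i true))]
  refine Finset.sum_congr rfl fun s _ => ?_
  simp only [Function.update_self]
  cases hs : s i
  · simp
  · simp only [Bool.not_true, if_neg (by simp : ¬(false = true)), if_pos hs]
    have h2 : Function.update (Function.update s i false) i true = s := by
      rw [Function.update_idem, ← hs]
      exact Function.update_eq_self i s
    rw [h2]
    norm_num

end Deriv

section D2
variable {n : ℕ} (f : (Fin n → Bool) → Bool)

noncomputable def D (i : Fin n) : ℝ := ∑ t, (dcoef f i t)^2
noncomputable def Q (i : Fin n) : ℝ := ∑ t, (1/3:ℝ)^(wt t) * (dcoef f i t)^2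

lemma D_nonneg (i : Fin n) : 0 ≤ D f i := Finset.sum_nonneg fun t _ => sq_nonneg _

lemma sum_gsq (i : Fin n) : ∑ x, (g f i x)^2 = 2^n * D f i := by
  have h : ∀ x, (g f i x)^2 = g f i x * g f i x := fun x => sq (g f i x)
  rw [Finset.sum_congr rfl fun x _ => h x, plancherel, coef_g, D]
  congr 1
  exact Finset.sum_congr rfl fun t _ => (sq (dcoef f i t)).symm

lemma gsq_ind (i : Fin n) (x : Fin n → Bool) :
    (g f i x)^2 = if f x = f (Function.update x i (!(x i))) then 0 else 1 := by
  simp only [g, F]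
  cases hx : x i
  · have h1 : Function.update x i false = x := by rw [← hx]; exact Function.update_eq_self i x
    rw [h1]
    simp only [Bool.not_false]
    cases h2 : f x <;> cases h3 : f (Function.update x i true) <;> simp [h2, h3] <;> norm_num
  · have h1 : Function.update x i true = x := by rw [← hx]; exact Function.update_eq_self i x
    rw [h1]
    simp only [Bool.not_true]
    cases h2 : f x <;> cases h3 : f (Function.update x i false) <;> simp [h2, h3] <;> norm_num

lemma card_eq (i : Fin n) :
    ((univ.filter fun x : Fin n → Bool => f x ≠ f (Function.update x i (!(x i)))).card : ℝ)
      = 2^n * D f i := by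
  rw [← sum_gsq]
  rw [Finset.card_filter]
  push_cast
  refine Finset.sum_congr rfl fun x _ => ?_
  rw [gsq_ind]
  by_cases h : f x = f (Function.update x i (!(x i))) <;> simp [h]

lemma D_eq (i : Fin n) :
    D f i = ∑ s, (if s i then (coef (F f) s)^2 else 0) := by
  rw [D, ← sum_reindex i (fun s => (coef (F f) s)^2)]
  refine Finset.sum_congr rfl fun t _ => ?_
  rw [dcoef]
  by_cases h : t i = true <;> simp [h]

lemma Q_eq (i : Fin n) :
    Q f i = ∑ s, (if s i then (1/3:ℝ)^(wt s - 1) * (coef (F f) s)^2 else 0) := by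
  rw [Q, ← sum_reindex i (fun s => (1/3:ℝ)^(wt s - 1) * (coef (F f) s)^2)]
  refine Finset.sum_congr rfl fun t _ => ?_
  rw [dcoef]
  by_cases h : t i = true
  · simp [h]
  · have hf : t i = false := by revert h; cases t i <;> simp
    rw [if_neg h, if_neg h, wt_update t i hf]
    simp

lemma sum_over_i (h : (Fin n → Bool) → ℝ) :
    ∑ i, ∑ s, (if s i then h s else 0) = ∑ s, (wt s : ℝ) * h s := by
  rw [Finset.sum_comm]
  refine Finset.sum_congr rfl fun s _ => ?_
  have h1 : ∀ i : Fin n, (if s i then h s else 0) = (if s i then (1:ℝ) else 0) * h s := by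
    intro i; by_cases hi : s i = true <;> simp [hi]
  rw [Finset.sum_congr rfl fun i _ => h1 i, ← Finset.sum_mul]
  congr 1
  rw [wt]
  push_cast
  refine Finset.sum_congr rfl fun i _ => ?_
  by_cases hi : s i = true <;> simp [hi]

lemma parseval_F : ∑ s, (coef (F f) s)^2 = 1 := by
  have h : ∀ x, F f x * F f x = 1 := by
    intro x; simp only [F]; cases f x <;> norm_num
  have h2 := plancherel (F f) (F f)
  rw [Finset.sum_congr rfl fun x _ => h x, Finset.sum_const, Finset.card_univ] at h2
  have hcard : Fintype.card (Fin n → Bool) = 2^n := by simp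
  rw [hcard] at h2
  have h2n : (2:ℝ)^n ≠ 0 := by positivity
  have h3 : ∑ s, coef (F f) s * coef (F f) s = 1 := by
    field_simp at h2
    rw [nsmul_eq_mul, mul_one] at h2
    push_cast at h2
    simp only [← sq]
    exact mul_left_cancel₀ h2n (h2.symm.trans (mul_one _).symm)
  rw [← h3]
  exact Finset.sum_congr rfl fun s _ => sq (coef (F f) s)

lemma coef_empty (hbal : 2 * (univ.filter fun x : Fin n → Bool => f x = true).card = 2^n) :
    coef (F f) (fun _ => false) = 0 := by
  have hchi : ∀ x : Fin n → Bool, chi (fun _ => false) x = 1 := by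
    intro x; rw [chi]; simp
  have h1 : ∑ x, F f x * chi (fun _ => false) x = ∑ x, F f x := by
    refine Finset.sum_congr rfl fun x _ => by rw [hchi, mul_one]
  have h2 : ∑ x, F f x = 2 * ((univ.filter fun x : Fin n → Bool => f x = true).card : ℝ) - 2^n := by
    have h3 : ∀ x : Fin n → Bool, F f x = (if f x then (2:ℝ) else 0) - 1 := by
      intro x; simp only [F]; cases f x <;> norm_num
    rw [Finset.sum_congr rfl fun x _ => h3 x, Finset.sum_sub_distrib]
    rw [Finset.sum_const, Finset.card_univ]
    have hcard : Fintype.card (Fin n → Bool) = 2^n := by simp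
    rw [hcard]
    have h4 : ∑ x : Fin n → Bool, (if f x then (2:ℝ) else 0)
        = 2 * ((univ.filter fun x : Fin n → Bool => f x = true).card : ℝ) := by
      rw [← Finset.sum_filter, Finset.sum_const]
      simp [mul_comm]
    rw [h4]
    push_cast
    ring
  rw [coef, h1, h2]
  have : 2 * ((univ.filter fun x : Fin n → Bool => f x = true).card : ℝ) = 2^n := by
    exact_mod_cast congrArg (Nat.cast : ℕ → ℝ) hbal
  rw [this]
  simp

lemma Q_le_chain (i : Fin n) : Q f i ≤ D f i * Real.sqrt (Real.sqrt (D f i)) := by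
  classical
  set P : (Fin n → Bool) → ℝ :=
    fun x => ∑ t, ((1/3:ℝ)^(wt t) * dcoef f i t) * chi t x with hP
  have hD0 : 0 ≤ D f i := D_nonneg f i
  set B : ℝ := 2^n * D f i with hB
  have hB0 : 0 ≤ B := by positivity
  have hgsq : ∀ x, 0 ≤ (g f i x)^2 := fun x => sq_nonneg _
  have hg_le1 : ∀ x, (g f i x)^2 ≤ 1 := by
    intro x; rcases g_vals f i x with h | h | h <;> rw [h] <;> norm_num
  have habs : ∀ x, |g f i x| = (g f i x)^2 := by
    intro x; rcases g_vals f i x with h | h | h <;> rw [h] <;> norm_num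
  -- step 1 : ∑ P g = 2^n * Q
  have hQP : ∑ x, P x * g f i x = 2^n * Q f i := by
    rw [plancherel P (g f i), coef_g]
    congr 1
    refine Finset.sum_congr rfl fun t _ => ?_
    rw [hP, coef_combo]
    ring
  -- step 2
  have step2 : ∑ x, P x * g f i x ≤ ∑ x, |P x| * (g f i x)^2 := by
    refine Finset.sum_le_sum fun x _ => ?_
    calc P x * g f i x ≤ |P x * g f i x| := le_abs_self _
      _ = |P x| * |g f i x| := abs_mul _ _
      _ = |P x| * (g f i x)^2 := by rw [habs]
  -- Bonami
  have step5 : ∑ x, (P x)^4 ≤ 2^n * (D f i)^2 := by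
    have hb := bonami (1/3) (by norm_num) (by norm_num) n (dcoef f i)
    rw [hP]
    exact hb.trans (le_of_eq (by rw [D]))
  have hA : ∑ x, (g f i x)^2 = B := sum_gsq f i
  have hP4g : ∑ x, (P x)^4 * (g f i x)^2 ≤ ∑ x, (P x)^4 := by
    refine Finset.sum_le_sum fun x _ => ?_
    nlinarith [hg_le1 x, hgsq x, pow_nonneg (sq_nonneg (P x)) 2, sq_nonneg ((P x)^2)]
  -- step 4 : ∑ P² g² ≤ B * sqrt (D)
  have hPg2_nonneg : 0 ≤ ∑ x, (P x)^2 * (g f i x)^2 :=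
    Finset.sum_nonneg fun x _ => by positivity
  have step4 : ∑ x, (P x)^2 * (g f i x)^2 ≤ B * Real.sqrt (D f i) := by
    have cs := Finset.sum_mul_sq_le_sq_mul_sq univ
      (fun x => (P x)^2 * |g f i x|) (fun x => |g f i x|)
    have e1 : ∀ x : Fin n → Bool, ((P x)^2 * |g f i x|) * |g f i x| = (P x)^2 * (g f i x)^2 := by
      intro x; rw [mul_assoc, abs_mul_abs_self]; ring
    have e2 : ∀ x : Fin n → Bool, ((P x)^2 * |g f i x|)^2 = (P x)^4 * (g f i x)^2 := by
      intro x; rw [mul_pow, sq_abs]; ring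
    have e3 : ∀ x : Fin n → Bool, (|g f i x|)^2 = (g f i x)^2 := fun x => sq_abs _
    rw [Finset.sum_congr rfl fun x _ => e1 x, Finset.sum_congr rfl fun x _ => e2 x,
        Finset.sum_congr rfl fun x _ => e3 x, hA] at cs
    have h1 : (∑ x, (P x)^2 * (g f i x)^2)^2 ≤ (2^n * (D f i)^2) * B := by
      calc (∑ x, (P x)^2 * (g f i x)^2)^2 ≤ (∑ x, (P x)^4 * (g f i x)^2) * B := cs
        _ ≤ (∑ x, (P x)^4) * B := by
            apply mul_le_mul_of_nonneg_right (hP4g) hB0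
        _ ≤ (2^n * (D f i)^2) * B := mul_le_mul_of_nonneg_right step5 hB0
    have h2 : (2^n * (D f i)^2) * B = (B * Real.sqrt (D f i))^2 := by
      rw [mul_pow, Real.sq_sqrt hD0, hB]; ring
    rw [h2] at h1
    have h3 : 0 ≤ B * Real.sqrt (D f i) := mul_nonneg hB0 (Real.sqrt_nonneg _)
    exact (pow_le_pow_iff_left₀ hPg2_nonneg h3 (by norm_num)).1 h1
  -- step 3 : ∑ |P| g² ≤ B * sqrt (sqrt D)
  have habsg_nonneg : 0 ≤ ∑ x, |P x| * (g f i x)^2 :=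
    Finset.sum_nonneg fun x _ => mul_nonneg (abs_nonneg _) (hgsq x)
  have step3 : ∑ x, |P x| * (g f i x)^2 ≤ B * Real.sqrt (Real.sqrt (D f i)) := by
    have cs := Finset.sum_mul_sq_le_sq_mul_sq univ
      (fun x => |P x| * |g f i x|) (fun x => |g f i x|)
    have e1 : ∀ x : Fin n → Bool, (|P x| * |g f i x|) * |g f i x| = |P x| * (g f i x)^2 := by
      intro x; rw [mul_assoc, abs_mul_abs_self]; ring
    have e2 : ∀ x : Fin n → Bool, (|P x| * |g f i x|)^2 = (P x)^2 * (g f i x)^2 := by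
      intro x; rw [mul_pow, sq_abs, sq_abs]
    have e3 : ∀ x : Fin n → Bool, (|g f i x|)^2 = (g f i x)^2 := fun x => sq_abs _
    rw [Finset.sum_congr rfl fun x _ => e1 x, Finset.sum_congr rfl fun x _ => e2 x,
        Finset.sum_congr rfl fun x _ => e3 x, hA] at cs
    have h1 : (∑ x, |P x| * (g f i x)^2)^2 ≤ (B * Real.sqrt (D f i)) * B := by
      calc (∑ x, |P x| * (g f i x)^2)^2 ≤ (∑ x, (P x)^2 * (g f i x)^2) * B := cs
        _ ≤ (B * Real.sqrt (D f i)) * B := mul_le_mul_of_nonneg_right step4 hB0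
    have h2 : (B * Real.sqrt (D f i)) * B = (B * Real.sqrt (Real.sqrt (D f i)))^2 := by
      rw [mul_pow, Real.sq_sqrt (Real.sqrt_nonneg _)]; ring
    rw [h2] at h1
    have h3 : 0 ≤ B * Real.sqrt (Real.sqrt (D f i)) :=
      mul_nonneg hB0 (Real.sqrt_nonneg _)
    exact (pow_le_pow_iff_left₀ habsg_nonneg h3 (by norm_num)).1 h1
  -- combine
  have final : 2^n * Q f i ≤ 2^n * (D f i * Real.sqrt (Real.sqrt (D f i))) := by
    rw [← hQP]
    calc ∑ x, P x * g f i x ≤ ∑ x, |P x| * (g f i x)^2 := step2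
      _ ≤ B * Real.sqrt (Real.sqrt (D f i)) := step3
      _ = 2^n * (D f i * Real.sqrt (Real.sqrt (D f i))) := by rw [hB]; ring
  have h2n : (0:ℝ) < 2^n := by positivity
  exact le_of_mul_le_mul_left final h2n

end D2

lemma sqrt_exp (y : ℝ) : Real.sqrt (Real.exp y) = Real.exp (y/2) := by
  have h : Real.exp y = (Real.exp (y/2))^2 := by
    rw [← Real.exp_nat_mul]; congr 1; push_cast; ring
  rw [h, Real.sqrt_sq (Real.exp_pos _).le]

lemma numeric (n : ℕ) (hn : 2 ≤ n) :
    Real.sqrt (Real.sqrt ((1/100) * Real.log n / n)) * ((n:ℝ) * ((1/100) * Real.log n / n))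
      < Real.exp (-(2 * (n:ℝ) * ((1/100) * Real.log n / n)) * Real.log 3) * (1/2) := by
  have hn1 : (1:ℝ) < n := by exact_mod_cast Nat.lt_of_lt_of_le one_lt_two hn
  have hn0 : (0:ℝ) < n := lt_trans one_pos hn1
  set L := Real.log n with hLdef
  have hL : 0 < L := Real.log_pos hn1
  have hnexp : (n:ℝ) = Real.exp L := (Real.exp_log hn0).symm
  have hτn : (n:ℝ) * ((1/100) * L / n) = L/100 := by field_simp
  have hbb : -(2 * (n:ℝ) * ((1/100) * L / n)) * Real.log 3 = -(L/50) * Real.log 3 := by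
    field_simp; ring
  rw [hτn, hbb]
  -- bound the left factor
  have hτeq : (1/100) * L / n = (L/100) / (n:ℝ) := by ring
  have h1 : Real.sqrt (Real.sqrt ((1/100) * L / n))
      = Real.sqrt (Real.sqrt (L/100)) / Real.exp (L/4) := by
    rw [hτeq, Real.sqrt_div (by positivity) _, Real.sqrt_div (Real.sqrt_nonneg _) _]
    congr 1
    rw [hnexp, sqrt_exp, sqrt_exp]
    congr 1
    ring
  have h2 : L/100 ≤ Real.exp (3*L/20) / 15 := by
    have := Real.add_one_le_exp (3*L/20)
    linarith
  have h3 : Real.sqrt (Real.sqrt (L/100)) ≤ Real.exp (3*L/80) := by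
    have e1 : L/100 ≤ Real.exp (3*L/20) := by
      have := Real.exp_pos (3*L/20); linarith
    calc Real.sqrt (Real.sqrt (L/100)) ≤ Real.sqrt (Real.sqrt (Real.exp (3*L/20))) := by
          apply Real.sqrt_le_sqrt; exact Real.sqrt_le_sqrt e1
      _ = Real.exp (3*L/80) := by rw [sqrt_exp, sqrt_exp]; congr 1; ring
  have hLHS : Real.sqrt (Real.sqrt ((1/100) * L / n)) * (L/100)
      ≤ Real.exp (-(L/16)) / 15 := by
    rw [h1]
    have hstep : Real.sqrt (Real.sqrt (L/100)) / Real.exp (L/4) * (L/100)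
        ≤ (Real.exp (3*L/80) / Real.exp (L/4)) * (Real.exp (3*L/20) / 15) := by
      gcongr
    refine hstep.trans (le_of_eq ?_)
    rw [← Real.exp_sub, ← mul_div_assoc, ← Real.exp_add]
    congr 1
    ring
  -- bound the right side
  have hlog3 : Real.log 3 ≤ 2 := by
    have := Real.log_le_sub_one_of_pos (by norm_num : (0:ℝ) < 3)
    linarith
  have hlog3' : 0 < Real.log 3 := Real.log_pos (by norm_num)
  have hRHS : Real.exp (-(L/16)) * (1/2) ≤ Real.exp (-(L/50) * Real.log 3) * (1/2) := by
    have : -(L/16) ≤ -(L/50) * Real.log 3 := by nlinarith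
    have := Real.exp_le_exp.2 this
    linarith
  have hmid : Real.exp (-(L/16)) / 15 < Real.exp (-(L/16)) * (1/2) := by
    have := Real.exp_pos (-(L/16))
    nlinarith
  calc Real.sqrt (Real.sqrt ((1/100) * L / n)) * (L/100)
      ≤ Real.exp (-(L/16)) / 15 := hLHS
    _ < Real.exp (-(L/16)) * (1/2) := hmid
    _ ≤ Real.exp (-(L/50) * Real.log 3) * (1/2) := hRHS

end KKL

open KKL

/-- Kahn–Kalai–Linial: every balanced Boolean function on `{-1,1}ⁿ` has a coordinate of
influence at least `c · log n / n`. Here the influence of coordinate `i` is the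
probability that flipping the `i`-th bit changes the value of `f`. -/
theorem kahn_kalai_linial :
    ∃ c : ℝ, 0 < c ∧
      ∀ (n : ℕ) (f : (Fin n → Bool) → Bool), 2 ≤ n →
        2 * (Finset.univ.filter fun x : Fin n → Bool => f x = true).card = 2 ^ n →
        ∃ i : Fin n,
          c * Real.log n / n ≤
            ((Finset.univ.filter fun x : Fin n → Bool =>
                f x ≠ f (Function.update x i (!(x i)))).card : ℝ) / 2 ^ n := by
  classical
  refine ⟨1/100, by norm_num, ?_⟩
  intro n f hn hbal
  by_contra hcon
  push_neg at hcon
  set τ : ℝ := (1/100) * Real.log n / n with hτdef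
  have hn1 : (1:ℝ) < n := by exact_mod_cast Nat.lt_of_lt_of_le one_lt_two hn
  have hn0 : (0:ℝ) < n := lt_trans one_pos hn1
  have hL : 0 < Real.log n := Real.log_pos hn1
  have hτ : 0 < τ := by rw [hτdef]; positivity
  have h2n : (0:ℝ) < 2^n := by positivity
  -- each influence < τ
  have hDi : ∀ i : Fin n, D f i < τ := by
    intro i
    have h := hcon i
    rw [div_lt_iff₀ h2n] at h
    rw [card_eq f i] at h
    have : 1/100 * Real.log n / n = τ := rfl
    nlinarith [h]
  have hD0 : ∀ i : Fin n, 0 ≤ D f i := D_nonneg f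
  -- total influence
  have hW : ∑ i, D f i ≤ n * τ := by
    calc ∑ i, D f i ≤ ∑ _i : Fin n, τ := Finset.sum_le_sum fun i _ => (hDi i).le
      _ = n * τ := by rw [Finset.sum_const, Finset.card_univ, Fintype.card_fin, nsmul_eq_mul]
  set a : (Fin n → Bool) → ℝ := fun s => coef (F f) s with ha
  have hpar : ∑ s, (a s)^2 = 1 := parseval_F f
  have h0 : a (fun _ => false) = 0 := coef_empty f hbal
  -- spectral form of total influence
  have hWs : ∑ i, D f i = ∑ s, (wt s : ℝ) * (a s)^2 := by
    rw [Finset.sum_congr rfl fun i _ => D_eq f i, sum_over_i]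
  -- spectral form of sum of Q
  have hQs : ∑ i, Q f i = ∑ s, (wt s : ℝ) * ((1/3:ℝ)^(wt s - 1) * (a s)^2) := by
    rw [Finset.sum_congr rfl fun i _ => Q_eq f i, sum_over_i]
  set bb : ℝ := 2 * n * τ with hbbdef
  have hbb0 : 0 < bb := by positivity
  -- Markov: weight of high frequencies
  set p : (Fin n → Bool) → Prop := fun s => ¬ (s = fun _ => false) ∧ (wt s : ℝ) ≤ bb with hp
  have hsplit := Finset.sum_filter_add_sum_filter_not univ p (fun s => (a s)^2)
  have hrest : ∑ s ∈ univ.filter (fun s => ¬ p s), (a s)^2 ≤ 1/2 := by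
    have hterm : ∀ s ∈ univ.filter (fun s => ¬ p s), (a s)^2 ≤ (wt s : ℝ)/bb * (a s)^2 := by
      intro s hs
      rw [Finset.mem_filter] at hs
      have hs2 : ¬ ((¬ (s = fun _ => false)) ∧ (wt s : ℝ) ≤ bb) := hs.2
      push_neg at hs2
      by_cases hz : s = fun _ => false
      · rw [hz, h0]; norm_num
      · have hgt : (wt s : ℝ) > bb := hs2 hz
        have : (1:ℝ) ≤ (wt s : ℝ)/bb := (one_le_div hbb0).2 hgt.le
        nlinarith [sq_nonneg (a s)]
    calc ∑ s ∈ univ.filter (fun s => ¬ p s), (a s)^2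
        ≤ ∑ s ∈ univ.filter (fun s => ¬ p s), (wt s : ℝ)/bb * (a s)^2 :=
          Finset.sum_le_sum hterm
      _ ≤ ∑ s, (wt s : ℝ)/bb * (a s)^2 := by
          apply Finset.sum_le_sum_of_subset_of_nonneg (Finset.filter_subset _ _)
          intro s _ _; positivity
      _ = (∑ s, (wt s : ℝ) * (a s)^2) / bb := by
          rw [Finset.sum_div]
          exact Finset.sum_congr rfl fun s _ => by ring
      _ ≤ (n * τ) / bb := by
          gcongr
          rw [← hWs]; exact hW
      _ = 1/2 := by rw [hbbdef]; field_simp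
  have hgood : 1/2 ≤ ∑ s ∈ univ.filter p, (a s)^2 := by
    have h1 : (1:ℝ) = (∑ s ∈ univ.filter p, (a s)^2)
        + ∑ s ∈ univ.filter (fun s => ¬ p s), (a s)^2 := by rw [hsplit, hpar]
    linarith
  -- lower bound on sum of Q
  have hlow : Real.exp (-bb * Real.log 3) * (1/2) ≤ ∑ i, Q f i := by
    rw [hQs]
    have hterm : ∀ s ∈ univ.filter p,
        Real.exp (-bb * Real.log 3) * (a s)^2 ≤ (wt s : ℝ) * ((1/3:ℝ)^(wt s - 1) * (a s)^2) := by
      intro s hs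
      rw [Finset.mem_filter, hp] at hs
      obtain ⟨-, hs0, hsb⟩ := hs
      have hw1 : 1 ≤ wt s := by
        rcases Nat.eq_zero_or_pos (wt s) with h | h
        · exact absurd (wt_eq_zero s h) hs0
        · exact h
      have hpow : Real.exp (-bb * Real.log 3) ≤ (1/3:ℝ)^(wt s - 1) := by
        have he : (1/3:ℝ)^(wt s - 1) = Real.exp (-((wt s - 1 : ℕ) : ℝ) * Real.log 3) := by
          rw [neg_mul, Real.exp_neg, ← Real.log_pow, Real.exp_log (by positivity), one_div, inv_pow]
        rw [he]
        apply Real.exp_le_exp.2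
        have : ((wt s - 1 : ℕ) : ℝ) ≤ bb := by
          have : ((wt s - 1 : ℕ) : ℝ) ≤ (wt s : ℝ) := Nat.cast_le.2 (Nat.sub_le _ _)
          linarith
        nlinarith [Real.log_pos (show (1:ℝ) < 3 by norm_num)]
      have hw1' : (1:ℝ) ≤ (wt s : ℝ) := by exact_mod_cast hw1
      have t1 : Real.exp (-bb * Real.log 3) * (a s)^2 ≤ (1/3:ℝ)^(wt s - 1) * (a s)^2 :=
        mul_le_mul_of_nonneg_right hpow (sq_nonneg _)
      have t2 : (1/3:ℝ)^(wt s - 1) * (a s)^2 ≤ (wt s : ℝ) * ((1/3:ℝ)^(wt s - 1) * (a s)^2) :=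
        le_mul_of_one_le_left (by positivity) hw1'
      linarith
    calc Real.exp (-bb * Real.log 3) * (1/2)
        ≤ Real.exp (-bb * Real.log 3) * ∑ s ∈ univ.filter p, (a s)^2 := by
          have := Real.exp_pos (-bb * Real.log 3)
          nlinarith
      _ = ∑ s ∈ univ.filter p, Real.exp (-bb * Real.log 3) * (a s)^2 := Finset.mul_sum _ _ _
      _ ≤ ∑ s ∈ univ.filter p, (wt s : ℝ) * ((1/3:ℝ)^(wt s - 1) * (a s)^2) :=
          Finset.sum_le_sum hterm
      _ ≤ ∑ s, (wt s : ℝ) * ((1/3:ℝ)^(wt s - 1) * (a s)^2) := by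
          apply Finset.sum_le_sum_of_subset_of_nonneg (Finset.filter_subset _ _)
          intro s _ _; positivity
  -- upper bound on sum of Q
  have hup : ∑ i, Q f i ≤ Real.sqrt (Real.sqrt τ) * (n * τ) := by
    calc ∑ i, Q f i ≤ ∑ i, D f i * Real.sqrt (Real.sqrt (D f i)) :=
          Finset.sum_le_sum fun i _ => Q_le_chain f i
      _ ≤ ∑ i, D f i * Real.sqrt (Real.sqrt τ) := by
          apply Finset.sum_le_sum
          intro i _
          apply mul_le_mul_of_nonneg_left _ (hD0 i)
          exact Real.sqrt_le_sqrt (Real.sqrt_le_sqrt (hDi i).le)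
      _ = Real.sqrt (Real.sqrt τ) * ∑ i, D f i := by
          rw [← Finset.sum_mul]; ring
      _ ≤ Real.sqrt (Real.sqrt τ) * (n * τ) := by
          apply mul_le_mul_of_nonneg_left hW (Real.sqrt_nonneg _)
  -- contradiction
  have := numeric n hn
  rw [← hτdef] at this
  have hfinal : Real.exp (-bb * Real.log 3) * (1/2) < Real.exp (-bb * Real.log 3) * (1/2) := by
    calc Real.exp (-bb * Real.log 3) * (1/2) ≤ ∑ i, Q f i := hlow
      _ ≤ Real.sqrt (Real.sqrt τ) * (n * τ) := hup
      _ < Real.exp (-(2 * (n:ℝ) * τ) * Real.log 3) * (1/2) := this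
      _ = Real.exp (-bb * Real.log 3) * (1/2) := by rw [hbbdef]
  exact lt_irrefl _ hfinal
end
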